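/- The vertices of the grevlex polytope Q are exactly: the origin 0, the points u^k = (b̃_{k-1} e_{k-1}, θ_k, θ_{k+1}, ..., θ_d) for 2 ≤ k ≤ d+1, and the points v^{j,k} = ((b̃_{k-1}-1)e_j, 0, ..., 0, θ_k + 1, θ_{k+1}, ..., θ_d) for 1 ≤ j < k-1 ≤ d. In particular u^2 = θ, u^{d+1} = b e_d, and v^{j,d+1} = (b-1)e_j. -/

import Mathlib

open Set Finset

/-- A polytope: convex hull of finitely many points. -/
def IsPolytope {n : ℕ} (X : Set (Fin n → ℝ)) : Prop :=
  ∃ V : Finset (Fin n → ℝ), X = convexHull ℝ (V : Set (Fin n → ℝ))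

/-- Affine dimension of a set. -/
noncomputable def adim {n : ℕ} (S : Set (Fin n → ℝ)) : ℕ :=
  Module.finrank ℝ (vectorSpan ℝ S)

/-- `F` is a facet of `X`: an exposed face of affine dimension one less than `X`. -/
def IsFacet {n : ℕ} (X F : Set (Fin n → ℝ)) : Prop :=
  IsExposed ℝ X F ∧ adim F + 1 = adim X

/-- Two vertices of `X` are adjacent if the segment joining them is an exposed face. -/
def AdjVert {n : ℕ} (X : Set (Fin n → ℝ)) (u v : Fin n → ℝ) : Prop :=
  u ≠ v ∧ u ∈ X.extremePoints ℝ ∧ v ∈ X.extremePoints ℝ ∧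
    IsExposed ℝ X (segment ℝ u v)

/-- The convex cone generated by a set: all nonnegative multiples of convex combinations. -/
def coneHull {n : ℕ} (S : Set (Fin n → ℝ)) : Set (Fin n → ℝ) :=
  {0} ∪ {p | ∃ c : ℝ, 0 ≤ c ∧ ∃ z ∈ convexHull ℝ S, p = c • z}

/-- The tangent cone of `X` at a vertex `v`:
`v + cone{x - v : x an adjacent vertex of v}`. -/
def tangentCone {n : ℕ} (X : Set (Fin n → ℝ)) (v : Fin n → ℝ) : Set (Fin n → ℝ) :=
  {p | ∃ y ∈ coneHull {z | ∃ x, AdjVert X v x ∧ z = x - v}, p = v + y}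

/-- The graph (1-skeleton) of a polytope `X`, with the vertices of `X` as nodes. -/
def polyGraph {n : ℕ} (X : Set (Fin n → ℝ)) : SimpleGraph (Fin n → ℝ) where
  Adj := AdjVert X
  symm := by
    constructor
    intro u v h
    refine ⟨h.1.symm, h.2.2.1, h.2.1, ?_⟩
    rw [segment_symm]; exact h.2.2.2
  loopless := by constructor; intro u h; exact h.1 rfl

/-- Real point corresponding to an integer point. -/
def toR {d : ℕ} (x : Fin d → ℤ) : Fin d → ℝ := fun i => (x i : ℝ)

/-- Lexicographic order comparing from the last coordinate. -/
def lexLe {d : ℕ} (x y : Fin d → ℤ) : Prop :=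
  x = y ∨ ∃ i : Fin d, x i < y i ∧ ∀ k : Fin d, i < k → x k = y k

/-- Graded lexicographic order. -/
def grlexLe {d : ℕ} (x y : Fin d → ℤ) : Prop :=
  (∑ i, x i) < (∑ i, y i) ∨ ((∑ i, x i) = (∑ i, y i) ∧ lexLe x y)

/-- Graded reverse lexicographic order. -/
def grevlexLe {d : ℕ} (x y : Fin d → ℤ) : Prop :=
  (∑ i, x i) < (∑ i, y i) ∨ ((∑ i, x i) = (∑ i, y i) ∧ lexLe y x)

/-- The grlex polytope `P = conv{x ∈ ℤᵈ : 0 ≤ x ≼_grlex θ}`. -/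
def grlexP (d : ℕ) (θ : Fin d → ℤ) : Set (Fin d → ℝ) :=
  convexHull ℝ {p | ∃ x : Fin d → ℤ, (∀ i, 0 ≤ x i) ∧ grlexLe x θ ∧ p = toR x}

/-- The grevlex polytope `Q = conv{x ∈ ℤᵈ : 0 ≤ x ≼_grevlex θ}`. -/
def grevlexQ (d : ℕ) (θ : Fin d → ℤ) : Set (Fin d → ℝ) :=
  convexHull ℝ {p | ∃ x : Fin d → ℤ, (∀ i, 0 ≤ x i) ∧ grevlexLe x θ ∧ p = toR x}

/-- `b`, the total sum of `θ`. -/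
def bsum {d : ℕ} (θ : Fin d → ℤ) : ℤ := ∑ i, θ i

/-- `b̃ₖ`, the sum of the first `k` coordinates of `θ` (`k` is 1-indexed). -/
def btil {d : ℕ} (θ : Fin d → ℤ) (k : ℕ) : ℤ :=
  ∑ i ∈ Finset.univ.filter (fun i : Fin d => (i : ℕ) < k), θ i

/-- The vertex `w = (b-1)e_d` of `P`. -/
def wP (d : ℕ) (θ : Fin d → ℤ) : Fin d → ℤ :=
  fun i => if (i : ℕ) = d - 1 then bsum θ - 1 else 0

/-- The vertex `u^k = ((b̃_{k-1}+1)e_{k-1}, θ_k - 1, θ_{k+1}, …, θ_d)` of `P` (paper's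
1-indexing: coordinate `j` of the paper is index `j-1` here). -/
def uP (d : ℕ) (θ : Fin d → ℤ) (k : ℕ) : Fin d → ℤ :=
  fun i => if (i : ℕ) = k - 2 then btil θ (k - 1) + 1
    else if (i : ℕ) = k - 1 then θ i - 1
    else if k ≤ (i : ℕ) then θ i else 0

/-- The vertex `v^{j,k} = (b̃_k e_j, 0, …, 0, θ_{k+1}, …, θ_d)` of `P` (1-indexed). -/
def vP (d : ℕ) (θ : Fin d → ℤ) (j k : ℕ) : Fin d → ℤ :=
  fun i => if (i : ℕ) = j - 1 then btil θ k
    else if k ≤ (i : ℕ) then θ i else 0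

/-- The point `b·e_j` (1-indexed `j`). -/
def beP (d : ℕ) (θ : Fin d → ℤ) (j : ℕ) : Fin d → ℤ :=
  fun i => if (i : ℕ) = j - 1 then bsum θ else 0

/-- The vertex `u^k = (b̃_{k-1}e_{k-1}, θ_k, …, θ_d)` of `Q` (1-indexed, `2 ≤ k ≤ d+1`). -/
def uQ (d : ℕ) (θ : Fin d → ℤ) (k : ℕ) : Fin d → ℤ :=
  fun i => if (i : ℕ) = k - 2 then btil θ (k - 1)
    else if k - 1 ≤ (i : ℕ) then θ i else 0

/-- The vertex `v^{j,k} = ((b̃_{k-1}-1)e_j, 0, …, 0, θ_k + 1, θ_{k+1}, …, θ_d)` of `Q`. -/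
def vQ (d : ℕ) (θ : Fin d → ℤ) (j k : ℕ) : Fin d → ℤ :=
  fun i => if (i : ℕ) = j - 1 then btil θ (k - 1) - 1
    else if (i : ℕ) = k - 1 then θ i + 1
    else if k ≤ (i : ℕ) then θ i else 0

/-- Edge boundary of a vertex set in a graph. -/
def eboundary {V : Type*} (G : SimpleGraph V) (S : Set V) : Set (V × V) :=
  {p | G.Adj p.1 p.2 ∧ p.1 ∈ S ∧ p.2 ∉ S}


lemma toR_inj {d : ℕ} {x y : Fin d → ℤ} (h : toR x = toR y) : x = y := by
  funext i
  have : ((x i : ℝ)) = (y i : ℝ) := congrFun h i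
  exact_mod_cast this

/-- strict maximizer of a linear functional over A is an extreme point of conv A -/
lemma extreme_of_strict_max {d : ℕ} (A : Set (Fin d → ℝ)) (c : Fin d → ℝ) (p : Fin d → ℝ)
    (hp : p ∈ A) (h : ∀ x ∈ A, x ≠ p → ∑ i, c i * x i < ∑ i, c i * p i) :
    p ∈ (convexHull ℝ A).extremePoints ℝ := by
  set f : (Fin d → ℝ) → ℝ := fun x => ∑ i, c i * x i with hf
  have hfl : ∀ (a b : ℝ) (x y : Fin d → ℝ), f (a • x + b • y) = a * f x + b * f y := by
    intro a b x y
    simp only [hf, Pi.add_apply, Pi.smul_apply, smul_eq_mul, Finset.mul_sum]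
    rw [← Finset.sum_add_distrib]
    exact Finset.sum_congr rfl fun i _ => by ring
  set C : Set (Fin d → ℝ) := {y | f y < f p ∨ y = p} with hC
  have hmemC : ∀ y, y ∈ C ↔ (f y < f p ∨ y = p) := fun y => Iff.rfl
  have hconv : Convex ℝ C := by
    intro x hx y hy a b ha hb hab
    rw [hmemC] at hx hy ⊢
    rcases eq_or_lt_of_le ha with h0 | h0
    · have hb1 : b = 1 := by linarith
      rw [← h0, hb1]
      simpa using hy
    rcases eq_or_lt_of_le hb with h1 | h1
    · have ha1 : a = 1 := by linarith
      rw [← h1, ha1]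
      simpa using hx
    rcases hx with hx | hx
    · left
      rw [hfl a b x y]
      have habp : a * f p + b * f p = f p := by rw [← add_mul, hab, one_mul]
      rcases hy with hy | hy
      · nlinarith [mul_lt_mul_of_pos_left hx h0, mul_lt_mul_of_pos_left hy h1]
      · rw [hy]
        nlinarith [mul_lt_mul_of_pos_left hx h0]
    · rcases hy with hy | hy
      · left
        rw [hfl a b x y, hx]
        have habp : a * f p + b * f p = f p := by rw [← add_mul, hab, one_mul]
        nlinarith [mul_lt_mul_of_pos_left hy h1]
      · right
        rw [hx, hy, ← add_smul, hab, one_smul]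
  have hsub : convexHull ℝ A ⊆ C := by
    apply convexHull_min _ hconv
    intro x hx
    rw [hmemC]
    by_cases hxp : x = p
    · right; exact hxp
    · left; exact h x hx hxp
  rw [mem_extremePoints]
  refine ⟨subset_convexHull ℝ A hp, ?_⟩
  intro x₁ hx₁ x₂ hx₂ hseg
  obtain ⟨a, b, ha, hb, hab, hcomb⟩ := hseg
  have hfp : a * f x₁ + b * f x₂ = f p := by rw [← hfl a b x₁ x₂, hcomb]
  have h1 := (hmemC x₁).1 (hsub hx₁)
  have h2 := (hmemC x₂).1 (hsub hx₂)
  have habp : a * f p + b * f p = f p := by rw [← add_mul, hab, one_mul]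
  rcases h1 with h1 | h1
  · rcases h2 with h2 | h2
    · nlinarith [mul_lt_mul_of_pos_left h1 ha, mul_lt_mul_of_pos_left h2 hb]
    · rw [h2] at hfp
      nlinarith [mul_lt_mul_of_pos_left h1 ha]
  · rcases h2 with h2 | h2
    · rw [h1] at hfp
      nlinarith [mul_lt_mul_of_pos_left h2 hb]
    · exact ⟨h1, h2⟩

lemma not_extreme_of_mid {d : ℕ} (A : Set (Fin d → ℝ)) (p x y : Fin d → ℝ)
    (hx : x ∈ A) (hy : y ∈ A) (hxy : x ≠ y) (hmid : x + y = p + p) :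
    p ∉ (convexHull ℝ A).extremePoints ℝ := by
  intro hext
  rw [mem_extremePoints] at hext
  have hseg : p ∈ openSegment ℝ x y := by
    refine ⟨1/2, 1/2, by norm_num, by norm_num, by norm_num, ?_⟩
    funext i
    have := congrFun hmid i
    simp only [Pi.add_apply] at this
    simp only [Pi.add_apply, Pi.smul_apply, smul_eq_mul]
    linarith
  obtain ⟨h1, h2⟩ := hext.2 x (subset_convexHull ℝ A hx) y (subset_convexHull ℝ A hy) hseg
  exact hxy (h1.trans h2.symm)
namespace Grevlex
variable {d : ℕ} {θ : Fin d → ℤ}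

def SQ (d : ℕ) (θ : Fin d → ℤ) : Set (Fin d → ℤ) := {x | (∀ i, 0 ≤ x i) ∧ grevlexLe x θ}

lemma genset_eq (d : ℕ) (θ : Fin d → ℤ) :
    {p | ∃ x : Fin d → ℤ, (∀ i, 0 ≤ x i) ∧ grevlexLe x θ ∧ p = toR x} = toR '' SQ d θ := by
  ext p
  constructor
  · rintro ⟨x, h1, h2, h3⟩; exact ⟨x, ⟨h1, h2⟩, h3.symm⟩
  · rintro ⟨x, ⟨h1, h2⟩, h3⟩; exact ⟨x, h1, h2, h3.symm⟩

lemma sum_split_nat (n : ℕ) (x : Fin d → ℤ) :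
    ∑ i, x i = (∑ i ∈ univ.filter (fun i : Fin d => (i:ℕ) < n), x i)
      + ∑ i ∈ univ.filter (fun i : Fin d => n ≤ (i:ℕ)), x i := by
  rw [← Finset.sum_filter_add_sum_filter_not univ (fun i : Fin d => (i:ℕ) < n) x]
  congr 1
  apply Finset.sum_congr _ (fun _ _ => rfl)
  apply Finset.filter_congr
  intro i _
  simp [not_lt]

lemma filter_ge_eq_insert (m : Fin d) :
    univ.filter (fun i : Fin d => (m:ℕ) ≤ (i:ℕ))
      = insert m (univ.filter (fun i : Fin d => (m:ℕ) < (i:ℕ))) := by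
  ext i
  simp only [Finset.mem_filter, Finset.mem_insert, Finset.mem_univ, true_and]
  constructor
  · intro h
    rcases eq_or_lt_of_le h with h | h
    · left; exact (Fin.val_injective h.symm)
    · right; exact h
  · rintro (rfl | h)
    · exact le_refl _
    · exact le_of_lt h

lemma sum_ge_split (m : Fin d) (x : Fin d → ℤ) :
    ∑ i ∈ univ.filter (fun i : Fin d => (m:ℕ) ≤ (i:ℕ)), x i
      = x m + ∑ i ∈ univ.filter (fun i : Fin d => (m:ℕ) < (i:ℕ)), x i := by
  rw [filter_ge_eq_insert m, Finset.sum_insert]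
  simp

lemma sum_split3 (m : Fin d) (x : Fin d → ℤ) :
    ∑ i, x i = (∑ i ∈ univ.filter (fun i : Fin d => (i:ℕ) < (m:ℕ)), x i) + x m
      + ∑ i ∈ univ.filter (fun i : Fin d => (m:ℕ) < (i:ℕ)), x i := by
  rw [sum_split_nat (m:ℕ) x, sum_ge_split m x, add_assoc]

lemma sum_if_val_single {s : Finset (Fin d)} {a : Fin d} (ha : a ∈ s) (w : Fin d → ℤ) :
    ∑ i ∈ s, (if (i:ℕ) = (a:ℕ) then w i else 0) = w a := by
  rw [Finset.sum_eq_single_of_mem a ha]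
  · simp
  · intro i _ hne
    rw [if_neg (fun h => hne (Fin.val_injective h))]

lemma btil_split (m : Fin d) : btil θ ((m:ℕ)+1) = btil θ (m:ℕ) + θ m := by
  unfold btil
  have : univ.filter (fun i : Fin d => (i:ℕ) < (m:ℕ)+1)
      = insert m (univ.filter (fun i : Fin d => (i:ℕ) < (m:ℕ))) := by
    ext i
    simp only [Finset.mem_filter, Finset.mem_insert, Finset.mem_univ, true_and]
    constructor
    · intro h
      rcases Nat.lt_succ_iff_lt_or_eq.1 h with h | h
      · right; exact h
      · left; exact Fin.val_injective h
    · rintro (rfl | h) <;> omega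
  rw [this, Finset.sum_insert (by simp)]
  ring

lemma bsum_split (m : Fin d) :
    bsum θ = btil θ (m:ℕ) + θ m + ∑ i ∈ univ.filter (fun i : Fin d => (m:ℕ) < (i:ℕ)), θ i :=
  sum_split3 m θ

lemma theta_le_btil (hθ : ∀ i, 1 ≤ θ i) {i : Fin d} {m : ℕ} (him : (i:ℕ) < m) :
    θ i ≤ btil θ m := by
  apply Finset.single_le_sum (fun j _ => by linarith [hθ j])
  simp [him]

lemma btil_pos (hθ : ∀ i, 1 ≤ θ i) (hd : 0 < d) {m : ℕ} (hm : 1 ≤ m) :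
    1 ≤ btil θ m := le_trans (hθ ⟨0, hd⟩) (theta_le_btil hθ (by show 0 < m; omega))

lemma btil_nonneg (hθ : ∀ i, 1 ≤ θ i) (m : ℕ) : 0 ≤ btil θ m :=
  Finset.sum_nonneg (fun i _ => by linarith [hθ i])

lemma btil_mono (hθ : ∀ i, 1 ≤ θ i) {m n : ℕ} (h : m ≤ n) : btil θ m ≤ btil θ n := by
  apply Finset.sum_le_sum_of_subset_of_nonneg
  · intro i hi
    simp only [Finset.mem_filter, Finset.mem_univ, true_and] at hi ⊢
    omega
  · intro i _ _; linarith [hθ i]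

lemma btil_d : btil θ d = bsum θ := by
  unfold btil bsum
  congr 1
  apply Finset.filter_true_of_mem
  intro i _
  exact i.isLt

lemma btil_le_b (hθ : ∀ i, 1 ≤ θ i) (m : ℕ) : btil θ m ≤ bsum θ := by
  rw [← btil_d]
  rcases le_or_gt m d with h | h
  · exact btil_mono hθ h
  · apply le_of_eq
    unfold btil
    congr 1
    apply Finset.filter_congr
    intro i _
    have := i.isLt
    constructor <;> intro <;> omega

lemma theta_add_le_btil (hθ : ∀ i, 1 ≤ θ i) {i j : Fin d} {m : ℕ} (hij : i ≠ j)
    (hi : (i:ℕ) < m) (hj : (j:ℕ) < m) : θ i + θ j ≤ btil θ m := by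
  rw [← Finset.sum_pair hij]
  apply Finset.sum_le_sum_of_subset_of_nonneg
  · intro l hl
    simp only [Finset.mem_insert, Finset.mem_singleton] at hl
    rcases hl with rfl | rfl <;> simp [hi, hj]
  · intro l _ _; linarith [hθ l]

lemma theta_le_b (hθ : ∀ i, 1 ≤ θ i) (i : Fin d) : θ i ≤ bsum θ := by
  rw [← btil_d]; exact theta_le_btil hθ i.isLt

lemma theta_lt_b (hθ : ∀ i, 1 ≤ θ i) (hd : 2 ≤ d) (i : Fin d) : θ i + 1 ≤ bsum θ := by
  have h0 : (0:ℕ) < d := by omega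
  have h1 : (1:ℕ) < d := by omega
  by_cases h : i = ⟨0, h0⟩
  · have := theta_add_le_btil hθ (show i ≠ ⟨1, h1⟩ by rw [h]; intro hc; simpa using congrArg Fin.val hc)
      i.isLt (show ((⟨1,h1⟩ : Fin d):ℕ) < d from h1)
    rw [btil_d] at this
    linarith [hθ ⟨1, h1⟩]
  · have := theta_add_le_btil hθ (show i ≠ ⟨0, h0⟩ from h) i.isLt h0
    rw [btil_d] at this
    linarith [hθ ⟨0, h0⟩]

lemma b_ge_d (hθ : ∀ i, 1 ≤ θ i) : (d:ℤ) ≤ bsum θ := by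
  have : ∑ _i : Fin d, (1:ℤ) ≤ ∑ i, θ i := Finset.sum_le_sum (fun i _ => hθ i)
  simpa [bsum] using this

lemma geom_bound (hθ : ∀ i, 1 ≤ θ i) (n : ℕ) (s : Finset (Fin d)) (t : Fin d → ℤ)
    (_ht0 : ∀ i ∈ s, 0 ≤ t i) (htb : ∀ i ∈ s, t i ≤ bsum θ) (hs : ∀ i ∈ s, (i:ℕ) < n) :
    ∑ i ∈ s, (bsum θ + 1)^(i:ℕ) * t i ≤ (bsum θ + 1)^n - 1 := by
  set b := bsum θ with hb
  have hb0 : 0 ≤ b := Finset.sum_nonneg (fun i _ => by linarith [hθ i])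
  have hM : (0:ℤ) ≤ b + 1 := by linarith
  calc ∑ i ∈ s, (b+1)^(i:ℕ) * t i
      ≤ ∑ i ∈ s, (b+1)^(i:ℕ) * b :=
        Finset.sum_le_sum (fun i hi => mul_le_mul_of_nonneg_left (htb i hi) (pow_nonneg hM _))
    _ = (∑ i ∈ s, (b+1)^(i:ℕ)) * b := by rw [Finset.sum_mul]
    _ = (∑ j ∈ s.image Fin.val, (b+1)^j) * b := by
        rw [Finset.sum_image (fun x _ y _ h => Fin.val_injective h)]
    _ ≤ (∑ j ∈ Finset.range n, (b+1)^j) * b := by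
        apply mul_le_mul_of_nonneg_right _ hb0
        apply Finset.sum_le_sum_of_subset_of_nonneg
        · intro j hj
          simp only [Finset.mem_image] at hj
          obtain ⟨i, hi, rfl⟩ := hj
          exact Finset.mem_range.2 (hs i hi)
        · intro j _ _; exact pow_nonneg hM _
    _ = (b+1)^n - 1 := by
        have := geom_sum_mul (b+1) n
        simpa using this

lemma sum_le_b {x : Fin d → ℤ} (hx : x ∈ SQ d θ) : ∑ i, x i ≤ bsum θ := by
  rcases hx.2 with h | h
  · exact le_of_lt h
  · exact le_of_eq h.1

lemma sum_nonneg' {x : Fin d → ℤ} (hx : x ∈ SQ d θ) : 0 ≤ ∑ i, x i :=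
  Finset.sum_nonneg (fun i _ => hx.1 i)

end Grevlex
namespace Grevlex
variable {d : ℕ} {θ : Fin d → ℤ}

/-- `U_m` (0-indexed): coordinate `m` is `b̃_{m+1}`, coordinates above `m` are `θ`, rest `0`. -/
def Upt (θ : Fin d → ℤ) (m : Fin d) : Fin d → ℤ :=
  fun i => if (i:ℕ) = (m:ℕ) then btil θ ((m:ℕ)+1) else if (m:ℕ) < (i:ℕ) then θ i else 0

/-- `V_{a,m}` (0-indexed, `a+2 ≤ m ≤ d`): coordinate `a` is `b̃_m - 1`, coordinate `m` (if `< d`)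
is `θ_m + 1`, coordinates above `m` are `θ`, rest `0`. -/
def Vpt (θ : Fin d → ℤ) (a : Fin d) (m : ℕ) : Fin d → ℤ :=
  fun i => if (i:ℕ) = (a:ℕ) then btil θ m - 1
    else if (i:ℕ) = m then θ i + 1
    else if m < (i:ℕ) then θ i else 0

lemma uQ_eq_Upt {k : ℕ} (h2 : 2 ≤ k) (hk : k ≤ d + 1) (hd : 0 < d) :
    uQ d θ k = Upt θ ⟨k - 2, by omega⟩ := by
  funext i
  unfold uQ Upt
  simp only
  by_cases h : (i:ℕ) = k - 2
  · rw [if_pos h, if_pos h]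
    congr 1
    omega
  · rw [if_neg h, if_neg h]
    by_cases h' : k - 1 ≤ (i:ℕ)
    · rw [if_pos h', if_pos (by omega)]
    · rw [if_neg h', if_neg (by omega)]

lemma vQ_eq_Vpt {j k : ℕ} (hj : 1 ≤ j) (hjk : j < k - 1) (hkd : k - 1 ≤ d) (hd : 0 < d) :
    vQ d θ j k = Vpt θ ⟨j - 1, by omega⟩ (k - 1) := by
  funext i
  unfold vQ Vpt
  simp only
  by_cases h : (i:ℕ) = j - 1
  · rw [if_pos h, if_pos h]
  · rw [if_neg h, if_neg h]
    by_cases h' : (i:ℕ) = k - 1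
    · rw [if_pos h', if_pos h']
    · rw [if_neg h', if_neg h']
      by_cases h'' : k ≤ (i:ℕ)
      · rw [if_pos h'', if_pos (by omega)]
      · rw [if_neg h'', if_neg (by omega)]

lemma Upt_sum (m : Fin d) : ∑ i, Upt θ m i = bsum θ := by
  rw [sum_split3 m (Upt θ m), bsum_split m]
  have h1 : ∑ i ∈ univ.filter (fun i : Fin d => (i:ℕ) < (m:ℕ)), Upt θ m i = 0 := by
    apply Finset.sum_eq_zero
    intro i hi
    simp only [Finset.mem_filter, Finset.mem_univ, true_and] at hi
    unfold Upt
    rw [if_neg (by omega), if_neg (by omega)]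
  have h2 : Upt θ m m = btil θ ((m:ℕ)+1) := by unfold Upt; rw [if_pos rfl]
  have h3 : ∑ i ∈ univ.filter (fun i : Fin d => (m:ℕ) < (i:ℕ)), Upt θ m i
      = ∑ i ∈ univ.filter (fun i : Fin d => (m:ℕ) < (i:ℕ)), θ i := by
    apply Finset.sum_congr rfl
    intro i hi
    simp only [Finset.mem_filter, Finset.mem_univ, true_and] at hi
    unfold Upt
    rw [if_neg (by omega), if_pos hi]
  rw [h1, h2, h3, btil_split m]
  ring

lemma Upt_nonneg (hθ : ∀ i, 1 ≤ θ i) (m : Fin d) (i : Fin d) : 0 ≤ Upt θ m i := by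
  unfold Upt
  split_ifs
  · exact btil_nonneg hθ _
  · linarith [hθ i]
  · exact le_refl 0

lemma Upt_mem (hθ : ∀ i, 1 ≤ θ i) (m : Fin d) : Upt θ m ∈ SQ d θ := by
  refine ⟨Upt_nonneg hθ m, Or.inr ⟨by rw [Upt_sum]; rfl, ?_⟩⟩
  by_cases h0 : btil θ (m:ℕ) = 0
  · -- then m = 0 in effect, and Upt θ m = θ
    left
    funext i
    unfold Upt
    have him : ¬ ((i:ℕ) < (m:ℕ)) := by
      intro hc
      have h1 := theta_le_btil hθ hc
      have := hθ i
      omega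
    by_cases h : (i:ℕ) = (m:ℕ)
    · rw [if_pos h, btil_split m, h0]
      have : i = m := Fin.val_injective h
      rw [this]; ring
    · rw [if_neg h, if_pos (by omega)]
  · right
    refine ⟨m, ?_, ?_⟩
    · unfold Upt
      rw [if_pos rfl, btil_split m]
      have h1 := btil_nonneg hθ (m:ℕ)
      omega
    · intro k hk
      have hk' : (m:ℕ) < (k:ℕ) := hk
      unfold Upt
      rw [if_neg (by omega), if_pos hk']

lemma Vpt_apply_a (a : Fin d) (m : ℕ) : Vpt θ a m a = btil θ m - 1 := by
  unfold Vpt; rw [if_pos rfl]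

lemma Vpt_apply_gt (a : Fin d) (m : ℕ) {i : Fin d} (h : m < (i:ℕ)) (ha : (a:ℕ) < m) :
    Vpt θ a m i = θ i := by
  unfold Vpt
  rw [if_neg (by omega), if_neg (by omega), if_pos h]

lemma Vpt_sum (hθ : ∀ i, 1 ≤ θ i) {a : Fin d} {m : ℕ} (ham : (a:ℕ) + 2 ≤ m) (hmd : m ≤ d) :
    ∑ i, Vpt θ a m i = if m = d then bsum θ - 1 else bsum θ := by
  have ha0 : 0 ≤ (a:ℕ) := Nat.zero_le _
  by_cases hmeq : m = d
  · rw [if_pos hmeq]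
    have hcongr : ∀ i : Fin d, Vpt θ a m i = (if (i:ℕ) = (a:ℕ) then (fun _ : Fin d => btil θ m - 1) i else 0) := by
      intro i
      unfold Vpt
      have := i.isLt
      by_cases h : (i:ℕ) = (a:ℕ)
      · rw [if_pos h, if_pos h]
      · rw [if_neg h, if_neg h, if_neg (by omega), if_neg (by omega)]
    rw [Finset.sum_congr rfl (fun i _ => hcongr i), sum_if_val_single (Finset.mem_univ a)]
    rw [hmeq, btil_d]
  · rw [if_neg hmeq]
    have hm : m < d := by omega
    set mF : Fin d := ⟨m, hm⟩ with hmF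
    have hmFv : (mF:ℕ) = m := rfl
    rw [sum_split3 mF (Vpt θ a m)]
    have h1 : ∑ i ∈ univ.filter (fun i : Fin d => (i:ℕ) < (mF:ℕ)), Vpt θ a m i
        = btil θ m - 1 := by
      have hcongr : ∀ i ∈ univ.filter (fun i : Fin d => (i:ℕ) < (mF:ℕ)),
          Vpt θ a m i = (if (i:ℕ) = (a:ℕ) then (fun _ : Fin d => btil θ m - 1) i else 0) := by
        intro i hi
        simp only [Finset.mem_filter, Finset.mem_univ, true_and, hmFv] at hi
        unfold Vpt
        by_cases h : (i:ℕ) = (a:ℕ)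
        · rw [if_pos h, if_pos h]
        · rw [if_neg h, if_neg h, if_neg (by omega), if_neg (by omega)]
      rw [Finset.sum_congr rfl hcongr, sum_if_val_single (by simp [hmFv]; omega)]
    have h2 : Vpt θ a m mF = θ mF + 1 := by
      unfold Vpt
      rw [if_neg (by simp [hmFv]; omega), if_pos hmFv]
    have h3 : ∑ i ∈ univ.filter (fun i : Fin d => (mF:ℕ) < (i:ℕ)), Vpt θ a m i
        = ∑ i ∈ univ.filter (fun i : Fin d => (mF:ℕ) < (i:ℕ)), θ i := by
      apply Finset.sum_congr rfl
      intro i hi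
      simp only [Finset.mem_filter, Finset.mem_univ, true_and, hmFv] at hi
      exact Vpt_apply_gt a m hi (by omega)
    rw [h1, h2, h3, bsum_split mF, hmFv]
    ring

lemma Vpt_nonneg (hθ : ∀ i, 1 ≤ θ i) (hd : 0 < d) {a : Fin d} {m : ℕ}
    (ham : (a:ℕ) + 2 ≤ m) (i : Fin d) : 0 ≤ Vpt θ a m i := by
  unfold Vpt
  split_ifs
  · have := btil_pos hθ hd (show 1 ≤ m by omega)
    omega
  · linarith [hθ i]
  · linarith [hθ i]
  · exact le_refl 0

lemma Vpt_mem (hθ : ∀ i, 1 ≤ θ i) (hd : 0 < d) {a : Fin d} {m : ℕ}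
    (ham : (a:ℕ) + 2 ≤ m) (hmd : m ≤ d) : Vpt θ a m ∈ SQ d θ := by
  refine ⟨Vpt_nonneg hθ hd ham, ?_⟩
  by_cases hmeq : m = d
  · left
    rw [show (∑ i, Vpt θ a m i) = bsum θ - 1 by rw [Vpt_sum hθ ham hmd, if_pos hmeq]]
    have h1 := btil_pos hθ hd (show 1 ≤ d by omega)
    show bsum θ - 1 < ∑ i, θ i
    have h2 : bsum θ = ∑ i, θ i := rfl
    omega
  · right
    constructor
    · rw [Vpt_sum hθ ham hmd, if_neg hmeq]; rfl
    · right
      have hm : m < d := by omega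
      refine ⟨⟨m, hm⟩, ?_, ?_⟩
      · show θ _ < Vpt θ a m ⟨m, hm⟩
        unfold Vpt
        rw [if_neg (by simp; omega), if_pos rfl]
        omega
      · intro k hk
        have hk' : m < (k:ℕ) := hk
        exact (Vpt_apply_gt a m hk' (by omega)).symm

end Grevlex
namespace Grevlex
variable {d : ℕ} {θ : Fin d → ℤ}

def MM (θ : Fin d → ℤ) : ℤ := bsum θ + 1
def HH (d : ℕ) (θ : Fin d → ℤ) : ℤ := (MM θ)^(2*d)

lemma M_ge_two (hθ : ∀ i, 1 ≤ θ i) (hd : 1 ≤ d) : 2 ≤ MM θ := by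
  have := b_ge_d hθ
  unfold MM
  have : (1:ℤ) ≤ (d:ℤ) := by exact_mod_cast hd
  linarith [b_ge_d hθ]

lemma M_pow_pos (hθ : ∀ i, 1 ≤ θ i) (hd : 1 ≤ d) (n : ℕ) : 0 < MM θ ^ n :=
  pow_pos (by linarith [M_ge_two hθ hd]) n

lemma M_pow_le_H (hθ : ∀ i, 1 ≤ θ i) (hd : 1 ≤ d) {n : ℕ} (hn : n ≤ 2*d) :
    MM θ ^ n ≤ HH d θ :=
  pow_le_pow_right₀ (by linarith [M_ge_two hθ hd]) hn

lemma M_pow_lt_H (hθ : ∀ i, 1 ≤ θ i) (hd : 1 ≤ d) {n : ℕ} (hn : n < 2*d) :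
    MM θ ^ n < HH d θ :=
  pow_lt_pow_right₀ (by linarith [M_ge_two hθ hd]) hn

lemma H_pos (hθ : ∀ i, 1 ≤ θ i) (hd : 1 ≤ d) : 0 < HH d θ := M_pow_pos hθ hd _

lemma d_lt_H (hθ : ∀ i, 1 ≤ θ i) (hd : 1 ≤ d) : (d:ℤ) < HH d θ := by
  have h1 : (d:ℤ) < MM θ := by unfold MM; linarith [b_ge_d hθ]
  have h2 : MM θ ≤ HH d θ := by
    have := M_pow_le_H hθ hd (show 1 ≤ 2*d by omega)
    simpa using this
  linarith

/-- coefficient vector for `U_m` -/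
def cU (θ : Fin d → ℤ) (m : Fin d) : Fin d → ℤ := fun i =>
  if (i:ℕ) < (m:ℕ) then (i:ℕ)+1
  else if (i:ℕ) = (m:ℕ) then HH d θ
  else HH d θ - (MM θ)^(i:ℕ)

/-- coefficient vector for `V_{a,m}`, `m < d` -/
def cV (θ : Fin d → ℤ) (a : Fin d) (m : ℕ) : Fin d → ℤ := fun i =>
  if (i:ℕ) = (a:ℕ) then HH d θ
  else if (i:ℕ) < m then 0
  else HH d θ - (MM θ)^(i:ℕ)

/-- coefficient vector for `(b-1)e_a` -/
def cW (a : Fin d) : Fin d → ℤ := fun i => if (i:ℕ) = (a:ℕ) then 1 else -1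

lemma sum_split3s (s : Finset (Fin d)) (m : Fin d) (hm : m ∈ s) (f : Fin d → ℤ) :
    ∑ i ∈ s, f i = (∑ i ∈ s.filter (fun i : Fin d => (i:ℕ) < (m:ℕ)), f i) + f m
      + ∑ i ∈ s.filter (fun i : Fin d => (m:ℕ) < (i:ℕ)), f i := by
  rw [← Finset.sum_filter_add_sum_filter_not s (fun i : Fin d => (i:ℕ) < (m:ℕ)) f]
  have h1 : s.filter (fun i : Fin d => ¬ ((i:ℕ) < (m:ℕ)))
      = insert m (s.filter (fun i : Fin d => (m:ℕ) < (i:ℕ))) := by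
    ext i
    simp only [Finset.mem_filter, Finset.mem_insert, not_lt]
    constructor
    · rintro ⟨his, hge⟩
      rcases eq_or_lt_of_le hge with h | h
      · left; exact Fin.val_injective h.symm
      · right; exact ⟨his, h⟩
    · rintro (rfl | ⟨his, h⟩)
      · exact ⟨hm, le_refl _⟩
      · exact ⟨his, le_of_lt h⟩
  rw [h1, Finset.sum_insert (by simp), add_assoc]

lemma expand_sub (s : Finset (Fin d)) (x : Fin d → ℤ) :
    ∑ i ∈ s, (HH d θ - (MM θ)^(i:ℕ)) * x i
      = HH d θ * (∑ i ∈ s, x i) - ∑ i ∈ s, (MM θ)^(i:ℕ) * x i := by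
  rw [Finset.mul_sum, ← Finset.sum_sub_distrib]
  exact Finset.sum_congr rfl (fun i _ => by ring)

lemma sum_c_le_H (c x : Fin d → ℤ) (hc : ∀ i, c i ≤ HH d θ) (hx : ∀ i, 0 ≤ x i) :
    ∑ i, c i * x i ≤ HH d θ * ∑ i, x i := by
  rw [Finset.mul_sum]
  exact Finset.sum_le_sum (fun i _ => mul_le_mul_of_nonneg_right (hc i) (hx i))

lemma csplitU0 (m : Fin d) (x : Fin d → ℤ) :
    ∑ i, cU θ m i * x i
      = (∑ i ∈ univ.filter (fun i : Fin d => (i:ℕ) < (m:ℕ)), (((i:ℕ):ℤ)+1) * x i)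
        + HH d θ * x m
        + ∑ i ∈ univ.filter (fun i : Fin d => (m:ℕ) < (i:ℕ)), (HH d θ - (MM θ)^(i:ℕ)) * x i := by
  rw [sum_split3 m (fun i => cU θ m i * x i)]
  congr 1
  congr 1
  · apply Finset.sum_congr rfl
    intro i hi
    simp only [Finset.mem_filter, Finset.mem_univ, true_and] at hi
    unfold cU
    rw [if_pos hi]
  · unfold cU
    rw [if_neg (by omega), if_pos rfl]
  · apply Finset.sum_congr rfl
    intro i hi
    simp only [Finset.mem_filter, Finset.mem_univ, true_and] at hi
    unfold cU
    rw [if_neg (by omega), if_neg (by omega)]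

lemma csplitV0 {a : Fin d} {m : ℕ} (hm : m < d) (ham : (a:ℕ) + 2 ≤ m) (x : Fin d → ℤ) :
    ∑ i, cV θ a m i * x i
      = HH d θ * x a + (HH d θ - (MM θ)^m) * x ⟨m, hm⟩
        + ∑ i ∈ univ.filter (fun i : Fin d => m < (i:ℕ)), (HH d θ - (MM θ)^(i:ℕ)) * x i := by
  rw [sum_split3 ⟨m, hm⟩ (fun i => cV θ a m i * x i)]
  congr 1
  congr 1
  · have hcongr : ∀ i ∈ univ.filter (fun i : Fin d => (i:ℕ) < ((⟨m, hm⟩ : Fin d):ℕ)),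
        cV θ a m i * x i = (if (i:ℕ) = (a:ℕ) then HH d θ * x i else 0) := by
      intro i hi
      simp only [Finset.mem_filter, Finset.mem_univ, true_and] at hi
      unfold cV
      by_cases h : (i:ℕ) = (a:ℕ)
      · rw [if_pos h, if_pos h]
      · rw [if_neg h, if_neg h, if_pos hi]
        ring
    rw [Finset.sum_congr rfl hcongr, sum_if_val_single (by simp; omega) (fun i => HH d θ * x i)]
  · unfold cV
    rw [if_neg (by simp; omega), if_neg (by simp)]
  · apply Finset.sum_congr rfl
    intro i hi
    simp only [Finset.mem_filter, Finset.mem_univ, true_and] at hi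
    unfold cV
    rw [if_neg (by omega), if_neg (by omega)]

lemma cW_sum (a : Fin d) (x : Fin d → ℤ) :
    ∑ i, cW a i * x i = 2 * x a - ∑ i, x i := by
  have hcongr : ∀ i : Fin d, cW a i * x i = (if (i:ℕ) = (a:ℕ) then 2 * x i else 0) + (- x i) := by
    intro i
    unfold cW
    by_cases h : (i:ℕ) = (a:ℕ)
    · rw [if_pos h, if_pos h]; ring
    · rw [if_neg h, if_neg h]; ring
  rw [Finset.sum_congr rfl (fun i _ => hcongr i), Finset.sum_add_distrib,
    sum_if_val_single (Finset.mem_univ a) (fun i => 2 * x i), Finset.sum_neg_distrib]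
  ring

end Grevlex
namespace Grevlex
variable {d : ℕ} {θ : Fin d → ℤ}

lemma level_b_head {x : Fin d → ℤ} (hsum : ∑ i, x i = ∑ i, θ i) (m : Fin d)
    (htail : ∀ k : Fin d, (m:ℕ) < (k:ℕ) → x k = θ k) :
    (∑ i ∈ univ.filter (fun i : Fin d => (i:ℕ) < (m:ℕ)), x i) + x m = btil θ ((m:ℕ)+1) := by
  have h1 := sum_split3 m x
  have h2 := sum_split3 m θ
  have h3 : ∑ i ∈ univ.filter (fun i : Fin d => (m:ℕ) < (i:ℕ)), x i
      = ∑ i ∈ univ.filter (fun i : Fin d => (m:ℕ) < (i:ℕ)), θ i := by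
    apply Finset.sum_congr rfl
    intro i hi
    simp only [Finset.mem_filter, Finset.mem_univ, true_and] at hi
    exact htail i hi
  have h4 : btil θ ((m:ℕ)+1) = btil θ (m:ℕ) + θ m := btil_split m
  have h5 : btil θ ((m:ℕ)) = ∑ i ∈ univ.filter (fun i : Fin d => (i:ℕ) < (m:ℕ)), θ i := rfl
  linarith

lemma btil_region (m m' : Fin d) (h : (m:ℕ) < (m':ℕ)) :
    btil θ ((m':ℕ)+1) = btil θ ((m:ℕ)+1)
      + (∑ i ∈ univ.filter (fun i : Fin d => (m:ℕ) < (i:ℕ) ∧ (i:ℕ) < (m':ℕ)), θ i) + θ m' := by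
  have h1 : btil θ ((m':ℕ)+1) = btil θ (m':ℕ) + θ m' := btil_split m'
  have h2 : btil θ ((m':ℕ)) = btil θ ((m:ℕ)+1)
      + ∑ i ∈ univ.filter (fun i : Fin d => (m:ℕ) < (i:ℕ) ∧ (i:ℕ) < (m':ℕ)), θ i := by
    show (∑ i ∈ univ.filter (fun i : Fin d => (i:ℕ) < (m':ℕ)), θ i) = _
    rw [← Finset.sum_filter_add_sum_filter_not (univ.filter (fun i : Fin d => (i:ℕ) < (m':ℕ)))
      (fun i : Fin d => (i:ℕ) < (m:ℕ)+1) θ]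
    congr 1
    · rw [Finset.filter_filter]
      unfold btil
      congr 1
      apply Finset.filter_congr
      intro i _
      first
      | omega
      | (simp only [eq_iff_iff]; omega)
    · rw [Finset.filter_filter]
      congr 1
      apply Finset.filter_congr
      intro i _
      first
      | omega
      | (simp only [eq_iff_iff]; omega)
  linarith

lemma witness_gt {x : Fin d → ℤ} (m : Fin d) (hlex : lexLe θ x)
    (k0 : Fin d) (hk0m : (m:ℕ) < (k0:ℕ)) (hk0 : x k0 ≠ θ k0) :
    ∃ m' : Fin d, (m:ℕ) < (m':ℕ) ∧ θ m' < x m' ∧ ∀ k : Fin d, (m':ℕ) < (k:ℕ) → x k = θ k := by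
  rcases hlex with heq | ⟨m', hm'1, hm'2⟩
  · exact absurd (congrFun heq k0).symm hk0
  · have hmm' : (m:ℕ) < (m':ℕ) := by
      by_contra hc
      exact hk0 ((hm'2 k0 (show m' < k0 from by rw [Fin.lt_def]; omega)).symm)
    exact ⟨m', hmm', hm'1, fun k hk => (hm'2 k (by rw [Fin.lt_def]; exact hk)).symm⟩

lemma strictmax_Upt (hθ : ∀ i, 1 ≤ θ i) (hd : 3 ≤ d) (m : Fin d) :
    ∀ x ∈ SQ d θ, x ≠ Upt θ m → ∑ i, cU θ m i * x i < ∑ i, cU θ m i * Upt θ m i := by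
  intro x hx hne
  have hd1 : 1 ≤ d := by omega
  have hH0 : 0 < HH d θ := H_pos hθ hd1
  have hMpos : ∀ n : ℕ, (0:ℤ) < MM θ ^ n := M_pow_pos hθ hd1
  -- value at the vertex
  have eqp : ∑ i, cU θ m i * Upt θ m i
      = HH d θ * btil θ ((m:ℕ)+1)
        + ∑ i ∈ univ.filter (fun i : Fin d => (m:ℕ) < (i:ℕ)), (HH d θ - MM θ^(i:ℕ)) * θ i := by
    rw [csplitU0]
    have h1 : (∑ i ∈ univ.filter (fun i : Fin d => (i:ℕ) < (m:ℕ)), (((i:ℕ):ℤ)+1) * Upt θ m i) = 0 :=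
      Finset.sum_eq_zero (fun i hi => by
        simp only [Finset.mem_filter, Finset.mem_univ, true_and] at hi
        unfold Upt
        rw [if_neg (by omega), if_neg (by omega), mul_zero])
    have h2 : Upt θ m m = btil θ ((m:ℕ)+1) := by unfold Upt; rw [if_pos rfl]
    have h3 : ∀ i ∈ univ.filter (fun i : Fin d => (m:ℕ) < (i:ℕ)),
        (HH d θ - MM θ^(i:ℕ)) * Upt θ m i = (HH d θ - MM θ^(i:ℕ)) * θ i := fun i hi => by
      simp only [Finset.mem_filter, Finset.mem_univ, true_and] at hi
      unfold Upt
      rw [if_neg (by omega), if_pos hi]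
    rw [h1, h2, Finset.sum_congr rfl h3]
    ring
  have hbsplit : bsum θ = btil θ ((m:ℕ)+1)
      + ∑ i ∈ univ.filter (fun i : Fin d => (m:ℕ) < (i:ℕ)), θ i := by
    rw [bsum_split m, btil_split m]; try ring
  rcases hx.2 with hlt | ⟨hsum, hlex⟩
  · -- level < b
    have hSig : ∑ i, x i ≤ bsum θ - 1 := by
      have : bsum θ = ∑ i, θ i := rfl
      omega
    have hc : ∀ i, cU θ m i ≤ HH d θ := by
      intro i
      unfold cU
      have hiv : ((i:ℕ):ℤ) + 1 ≤ (d:ℤ) := by exact_mod_cast i.isLt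
      have := d_lt_H hθ hd1
      split_ifs
      · linarith
      · exact le_refl _
      · linarith [hMpos (i:ℕ)]
    have h1 : ∑ i, cU θ m i * x i ≤ HH d θ * (bsum θ - 1) := by
      calc ∑ i, cU θ m i * x i ≤ HH d θ * ∑ i, x i := sum_c_le_H _ _ hc hx.1
      _ ≤ HH d θ * (bsum θ - 1) := mul_le_mul_of_nonneg_left hSig (le_of_lt hH0)
    have hexp := expand_sub (θ := θ) (univ.filter (fun i : Fin d => (m:ℕ) < (i:ℕ))) θ
    have hgeom : ∑ i ∈ univ.filter (fun i : Fin d => (m:ℕ) < (i:ℕ)), MM θ^(i:ℕ) * θ i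
        ≤ MM θ^d - 1 := geom_bound hθ d (univ.filter (fun i : Fin d => (m:ℕ) < (i:ℕ))) θ
      (fun i _ => by linarith [hθ i]) (fun i _ => theta_le_b hθ i)
      (fun i _ => i.isLt)
    have hMH : MM θ ^ d < HH d θ := M_pow_lt_H hθ hd1 (by omega)
    have hHb : HH d θ * bsum θ = HH d θ * btil θ ((m:ℕ)+1)
        + HH d θ * ∑ i ∈ univ.filter (fun i : Fin d => (m:ℕ) < (i:ℕ)), θ i := by
      rw [hbsplit]; ring
    rw [eqp]
    linarith
  · -- level = b
    rw [csplitU0 m x, eqp]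
    have hsum' : ∑ i, x i = bsum θ := hsum
    by_cases htail : ∀ k : Fin d, (m:ℕ) < (k:ℕ) → x k = θ k
    · -- tail agrees with θ above m
      have hGx : ∑ i ∈ univ.filter (fun i : Fin d => (m:ℕ) < (i:ℕ)), (HH d θ - MM θ^(i:ℕ)) * x i
          = ∑ i ∈ univ.filter (fun i : Fin d => (m:ℕ) < (i:ℕ)), (HH d θ - MM θ^(i:ℕ)) * θ i := by
        apply Finset.sum_congr rfl
        intro i hi
        simp only [Finset.mem_filter, Finset.mem_univ, true_and] at hi
        rw [htail i hi]
      have hhead := level_b_head hsum m htail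
      -- strict positivity of the head deficiency
      have hzero : ¬ (∀ i : Fin d, (i:ℕ) < (m:ℕ) → x i = 0) := by
        intro hz
        apply hne
        have hSL : ∑ i ∈ univ.filter (fun i : Fin d => (i:ℕ) < (m:ℕ)), x i = 0 :=
          Finset.sum_eq_zero (fun i hi => hz i (by
            simp only [Finset.mem_filter, Finset.mem_univ, true_and] at hi; exact hi))
        funext i
        rcases lt_trichotomy ((i:ℕ)) ((m:ℕ)) with h | h | h
        · rw [hz i h]
          unfold Upt
          rw [if_neg (by omega), if_neg (by omega)]
        · have : i = m := Fin.val_injective h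
          rw [this]
          unfold Upt
          rw [if_pos rfl]
          omega
        · rw [htail i h]
          unfold Upt
          rw [if_neg (by omega), if_pos h]
    -- obtain a positive head coordinate
      push_neg at hzero
      obtain ⟨i0, hi0m, hi0⟩ := hzero
      have hi0pos : 1 ≤ x i0 := by have := hx.1 i0; omega
      have hA : 0 < ∑ i ∈ univ.filter (fun i : Fin d => (i:ℕ) < (m:ℕ)),
          (HH d θ - (((i:ℕ):ℤ)+1)) * x i := by
        apply Finset.sum_pos'
        · intro i hi
          apply mul_nonneg _ (hx.1 i)
          have hiv : ((i:ℕ):ℤ) + 1 ≤ (d:ℤ) := by exact_mod_cast i.isLt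
          linarith [d_lt_H hθ hd1]
        · refine ⟨i0, Finset.mem_filter.2 ⟨Finset.mem_univ _, hi0m⟩, ?_⟩
          apply mul_pos _ (by omega)
          have hiv : ((i0:ℕ):ℤ) + 1 ≤ (d:ℤ) := by exact_mod_cast i0.isLt
          linarith [d_lt_H hθ hd1]
      have hexp2 : ∑ i ∈ univ.filter (fun i : Fin d => (i:ℕ) < (m:ℕ)), (HH d θ - (((i:ℕ):ℤ)+1)) * x i
          = HH d θ * (∑ i ∈ univ.filter (fun i : Fin d => (i:ℕ) < (m:ℕ)), x i)
            - ∑ i ∈ univ.filter (fun i : Fin d => (i:ℕ) < (m:ℕ)), (((i:ℕ):ℤ)+1) * x i := by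
        rw [Finset.mul_sum, ← Finset.sum_sub_distrib]
        exact Finset.sum_congr rfl (fun i _ => by ring)
      have hHhead : HH d θ * btil θ ((m:ℕ)+1)
          = HH d θ * (∑ i ∈ univ.filter (fun i : Fin d => (i:ℕ) < (m:ℕ)), x i)
            + HH d θ * x m := by
        rw [← hhead]; ring
      linarith
    · -- tail differs above m: lexLe witness m' > m
      push_neg at htail
      obtain ⟨k0, hk0m, hk0⟩ := htail
      obtain ⟨m', hmm', hm'1, hm'2⟩ := witness_gt m hlex k0 hk0m hk0
      -- split the G region at m'
      have hm'G : m' ∈ univ.filter (fun i : Fin d => (m:ℕ) < (i:ℕ)) :=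
        Finset.mem_filter.2 ⟨Finset.mem_univ _, hmm'⟩
      have hsplitG := fun (f : Fin d → ℤ) =>
        sum_split3s (univ.filter (fun i : Fin d => (m:ℕ) < (i:ℕ))) m' hm'G f
      have hset1 : (univ.filter (fun i : Fin d => (m:ℕ) < (i:ℕ))).filter
            (fun i : Fin d => (i:ℕ) < (m':ℕ))
          = univ.filter (fun i : Fin d => (m:ℕ) < (i:ℕ) ∧ (i:ℕ) < (m':ℕ)) := by
        rw [Finset.filter_filter]
      have hset2 : (univ.filter (fun i : Fin d => (m:ℕ) < (i:ℕ))).filter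
            (fun i : Fin d => (m':ℕ) < (i:ℕ))
          = univ.filter (fun i : Fin d => (m':ℕ) < (i:ℕ)) := by
        rw [Finset.filter_filter]
        apply Finset.filter_congr
        intro i _
        first
        | omega
        | (simp only [eq_iff_iff]; omega)
      set G1 := univ.filter (fun i : Fin d => (m:ℕ) < (i:ℕ) ∧ (i:ℕ) < (m':ℕ)) with hG1
      set G2 := univ.filter (fun i : Fin d => (m':ℕ) < (i:ℕ)) with hG2
      have hsplitx := hsplitG (fun i => (HH d θ - MM θ^(i:ℕ)) * x i)
      have hsplitθ := hsplitG (fun i => (HH d θ - MM θ^(i:ℕ)) * θ i)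
      rw [hset1, hset2] at hsplitx hsplitθ
      -- G2 sums agree
      have hQ : ∑ i ∈ G2, (HH d θ - MM θ^(i:ℕ)) * x i
          = ∑ i ∈ G2, (HH d θ - MM θ^(i:ℕ)) * θ i := by
        apply Finset.sum_congr rfl
        intro i hi
        simp only [hG2, Finset.mem_filter, Finset.mem_univ, true_and] at hi
        rw [hm'2 i hi]
      -- expansions over G1
      have heG1x := expand_sub (θ := θ) G1 x
      have heG1θ := expand_sub (θ := θ) G1 θ
      -- nonnegativity facts
      have hP4 : 0 ≤ ∑ i ∈ G1, MM θ^(i:ℕ) * x i :=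
        Finset.sum_nonneg (fun i _ => mul_nonneg (le_of_lt (hMpos _)) (hx.1 i))
      have hgeom1 : ∑ i ∈ G1, MM θ^(i:ℕ) * θ i ≤ MM θ^((m':ℕ)) - 1 :=
        geom_bound hθ (m':ℕ) G1 θ (fun i _ => by linarith [hθ i])
          (fun i _ => theta_le_b hθ i)
          (fun i hi => by
            rw [hG1, Finset.mem_filter] at hi
            exact hi.2.2)
      have hstep : MM θ^((m':ℕ)) * (θ m' + 1) ≤ MM θ^((m':ℕ)) * x m' :=
        mul_le_mul_of_nonneg_left (by omega) (le_of_lt (hMpos _))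
      -- head identity at m'
      have hhead' := level_b_head hsum m' (fun k hk => hm'2 k hk)
      -- decompose the head sum at m' through m
      have hmL' : m ∈ univ.filter (fun i : Fin d => (i:ℕ) < (m':ℕ)) :=
        Finset.mem_filter.2 ⟨Finset.mem_univ _, hmm'⟩
      have hsplitL' := sum_split3s (univ.filter (fun i : Fin d => (i:ℕ) < (m':ℕ))) m hmL' x
      have hsetL1 : (univ.filter (fun i : Fin d => (i:ℕ) < (m':ℕ))).filter
            (fun i : Fin d => (i:ℕ) < (m:ℕ))
          = univ.filter (fun i : Fin d => (i:ℕ) < (m:ℕ)) := by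
        rw [Finset.filter_filter]
        apply Finset.filter_congr
        intro i _
        first
        | omega
        | (simp only [eq_iff_iff]; omega)
      have hsetL2 : (univ.filter (fun i : Fin d => (i:ℕ) < (m':ℕ))).filter
            (fun i : Fin d => (m:ℕ) < (i:ℕ)) = G1 := by
        rw [Finset.filter_filter, hG1]
        apply Finset.filter_congr
        intro i _
        first
        | omega
        | (simp only [eq_iff_iff]; omega)
      rw [hsetL1, hsetL2] at hsplitL'
      -- region identity for btil
      have hreg := btil_region (θ := θ) m m' hmm'
      rw [← hG1] at hreg
      -- bound the low-coefficient head sum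
      have hSL1 : ∑ i ∈ univ.filter (fun i : Fin d => (i:ℕ) < (m:ℕ)), (((i:ℕ):ℤ)+1) * x i
          ≤ HH d θ * ∑ i ∈ univ.filter (fun i : Fin d => (i:ℕ) < (m:ℕ)), x i := by
        rw [Finset.mul_sum]
        apply Finset.sum_le_sum
        intro i _
        apply mul_le_mul_of_nonneg_right _ (hx.1 i)
        have hiv : ((i:ℕ):ℤ) + 1 ≤ (d:ℤ) := by exact_mod_cast i.isLt
        linarith [d_lt_H hθ hd1]
      -- multiply the head/region identities by H
      have hHhead' : HH d θ * ((∑ i ∈ univ.filter (fun i : Fin d => (i:ℕ) < (m':ℕ)), x i) + x m')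
          = HH d θ * btil θ ((m':ℕ)+1) := by rw [hhead']
      have hHsplitL' : HH d θ * (∑ i ∈ univ.filter (fun i : Fin d => (i:ℕ) < (m':ℕ)), x i)
          = HH d θ * (∑ i ∈ univ.filter (fun i : Fin d => (i:ℕ) < (m:ℕ)), x i)
            + HH d θ * x m + HH d θ * (∑ i ∈ G1, x i) := by rw [hsplitL']; ring
      have hHreg : HH d θ * btil θ ((m':ℕ)+1) = HH d θ * btil θ ((m:ℕ)+1)
          + HH d θ * (∑ i ∈ G1, θ i) + HH d θ * θ m' := by rw [hreg]; ring
      rw [hsplitx, hsplitθ, hQ, heG1x, heG1θ]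
      nlinarith [hSL1, hP4, hgeom1, hstep, hHhead', hHsplitL', hHreg, hMpos ((m':ℕ))]
end Grevlex
namespace Grevlex
variable {d : ℕ} {θ : Fin d → ℤ}

set_option maxHeartbeats 1000000 in
lemma strictmax_Vpt (hθ : ∀ i, 1 ≤ θ i) (hd : 3 ≤ d) {a : Fin d} {m : ℕ}
    (ham : (a:ℕ) + 2 ≤ m) (hm : m < d) :
    ∀ x ∈ SQ d θ, x ≠ Vpt θ a m → ∑ i, cV θ a m i * x i < ∑ i, cV θ a m i * Vpt θ a m i := by
  intro x hx hne
  have hd1 : 1 ≤ d := by omega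
  have hH0 : 0 < HH d θ := H_pos hθ hd1
  have hMpos : ∀ n : ℕ, (0:ℤ) < MM θ ^ n := M_pow_pos hθ hd1
  set mF : Fin d := ⟨m, hm⟩ with hmFdef
  have hmFv : ((mF : Fin d) : ℕ) = m := rfl
  -- value at the vertex
  have eqp : ∑ i, cV θ a m i * Vpt θ a m i
      = HH d θ * (btil θ m - 1) + (HH d θ - MM θ^m) * (θ mF + 1)
        + ∑ i ∈ univ.filter (fun i : Fin d => m < (i:ℕ)), (HH d θ - MM θ^(i:ℕ)) * θ i := by
    rw [csplitV0 hm ham]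
    have h1 : Vpt θ a m a = btil θ m - 1 := Vpt_apply_a a m
    have h2 : Vpt θ a m mF = θ mF + 1 := by
      unfold Vpt
      rw [if_neg (by rw [hmFv]; omega), if_pos hmFv]
    have h3 : ∀ i ∈ univ.filter (fun i : Fin d => m < (i:ℕ)),
        (HH d θ - MM θ^(i:ℕ)) * Vpt θ a m i = (HH d θ - MM θ^(i:ℕ)) * θ i := fun i hi => by
      simp only [Finset.mem_filter, Finset.mem_univ, true_and] at hi
      rw [Vpt_apply_gt a m hi (by omega)]
    rw [h1, h2, Finset.sum_congr rfl h3]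
  -- geometric bound for the whole upper region
  have hgeomV : MM θ^m * (θ mF + 1)
      + ∑ i ∈ univ.filter (fun i : Fin d => m < (i:ℕ)), MM θ^(i:ℕ) * θ i
      ≤ MM θ^d - 1 := by
    set t : Fin d → ℤ := fun i => if (i:ℕ) = m then θ i + 1 else θ i with ht
    have hsplit := sum_split3s (univ.filter (fun i : Fin d => m ≤ (i:ℕ))) mF
      (Finset.mem_filter.2 ⟨Finset.mem_univ _, by omega⟩) (fun i => MM θ^(i:ℕ) * t i)
    have he1 : (univ.filter (fun i : Fin d => m ≤ (i:ℕ))).filter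
          (fun i : Fin d => (i:ℕ) < (mF:ℕ)) = ∅ := by
      apply Finset.filter_false_of_mem
      intro i hi
      simp only [Finset.mem_filter, Finset.mem_univ, true_and] at hi
      rw [hmFv]
      omega
    have he2 : (univ.filter (fun i : Fin d => m ≤ (i:ℕ))).filter
          (fun i : Fin d => (mF:ℕ) < (i:ℕ)) = univ.filter (fun i : Fin d => m < (i:ℕ)) := by
      rw [Finset.filter_filter]
      apply Finset.filter_congr
      intro i _
      first
      | omega
      | (simp only [eq_iff_iff, hmFv]; omega)
    rw [he1, he2, Finset.sum_empty] at hsplit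
    have htmF : t mF = θ mF + 1 := by
      show (if ((mF : Fin d):ℕ) = m then θ mF + 1 else θ mF) = θ mF + 1
      rw [if_pos hmFv]
    have htG : ∀ i ∈ univ.filter (fun i : Fin d => m < (i:ℕ)), MM θ^(i:ℕ) * t i = MM θ^(i:ℕ) * θ i := by
      intro i hi
      simp only [Finset.mem_filter, Finset.mem_univ, true_and] at hi
      rw [ht]
      simp only
      rw [if_neg (by omega)]
    rw [htmF, Finset.sum_congr rfl htG] at hsplit
    have hgb : ∑ i ∈ univ.filter (fun i : Fin d => m ≤ (i:ℕ)), MM θ^(i:ℕ) * t i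
        ≤ MM θ^d - 1 := geom_bound hθ d (univ.filter (fun i : Fin d => m ≤ (i:ℕ))) t
      (fun i _ => by rw [ht]; simp only; split_ifs <;> linarith [hθ i])
      (fun i _ => by
        rw [ht]; simp only
        split_ifs
        · linarith [theta_lt_b hθ (by omega) i]
        · exact theta_le_b hθ i)
      (fun i _ => i.isLt)
    rw [hsplit] at hgb
    rw [hmFv] at hgb
    linarith
  rcases hx.2 with hlt | ⟨hsum, hlex⟩
  · -- level < b
    have hSig : ∑ i, x i ≤ bsum θ - 1 := by
      have : bsum θ = ∑ i, θ i := rfl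
      omega
    have hc : ∀ i, cV θ a m i ≤ HH d θ := by
      intro i
      unfold cV
      split_ifs
      · exact le_refl _
      · linarith
      · linarith [hMpos (i:ℕ)]
    have h1 : ∑ i, cV θ a m i * x i ≤ HH d θ * (bsum θ - 1) := by
      calc ∑ i, cV θ a m i * x i ≤ HH d θ * ∑ i, x i := sum_c_le_H _ _ hc hx.1
      _ ≤ HH d θ * (bsum θ - 1) := mul_le_mul_of_nonneg_left hSig (le_of_lt hH0)
    have hexp := expand_sub (θ := θ) (univ.filter (fun i : Fin d => m < (i:ℕ))) θ
    have hMH : MM θ ^ d < HH d θ := M_pow_lt_H hθ hd1 (by omega)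
    have hbsplit2 : bsum θ = btil θ m + θ mF
        + ∑ i ∈ univ.filter (fun i : Fin d => m < (i:ℕ)), θ i := bsum_split mF
    have hHb : HH d θ * bsum θ = HH d θ * btil θ m + HH d θ * θ mF
        + HH d θ * ∑ i ∈ univ.filter (fun i : Fin d => m < (i:ℕ)), θ i := by
      rw [hbsplit2]; ring
    rw [eqp]
    nlinarith [hgeomV, hMpos m]
  · -- level = b
    rw [csplitV0 hm ham x, eqp]
    have hsum' : ∑ i, x i = bsum θ := hsum
    have haL : a ∈ univ.filter (fun i : Fin d => (i:ℕ) < m) :=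
      Finset.mem_filter.2 ⟨Finset.mem_univ _, by omega⟩
    by_cases htail : ∀ k : Fin d, m < (k:ℕ) → x k = θ k
    · -- tail above m agrees
      have hGx : ∑ i ∈ univ.filter (fun i : Fin d => m < (i:ℕ)), (HH d θ - MM θ^(i:ℕ)) * x i
          = ∑ i ∈ univ.filter (fun i : Fin d => m < (i:ℕ)), (HH d θ - MM θ^(i:ℕ)) * θ i := by
        apply Finset.sum_congr rfl
        intro i hi
        simp only [Finset.mem_filter, Finset.mem_univ, true_and] at hi
        rw [htail i hi]
      have hhead : (∑ i ∈ univ.filter (fun i : Fin d => (i:ℕ) < m), x i) + x mF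
          = btil θ (m+1) := level_b_head hsum mF (fun k hk => htail k hk)
      have hbt : btil θ (m+1) = btil θ m + θ mF := btil_split mF
      have her : x a + ∑ i ∈ (univ.filter (fun i : Fin d => (i:ℕ) < m)).erase a, x i
          = ∑ i ∈ univ.filter (fun i : Fin d => (i:ℕ) < m), x i :=
        Finset.add_sum_erase _ x haL
      set r : ℤ := ∑ i ∈ (univ.filter (fun i : Fin d => (i:ℕ) < m)).erase a, x i with hrdef
      have hr0 : 0 ≤ r := Finset.sum_nonneg (fun i _ => hx.1 i)
      have hs0 : θ mF ≤ x mF := by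
        rcases hlex with heq | ⟨m'', h1'', h2''⟩
        · rw [← congrFun heq mF]
        · rcases lt_trichotomy ((m'':ℕ)) m with h | h | h
          · rw [← h2'' mF (by rw [Fin.lt_def, hmFv]; omega)]
          · have : m'' = mF := Fin.val_injective (by rw [hmFv]; exact h)
            rw [← this]; omega
          · exfalso
            have := htail m'' h
            omega
      have hxa : x a = btil θ m + θ mF - x mF - r := by
        have h1 := her
        have h2 := hhead
        have h3 := hbt
        linarith
      have hHxa : HH d θ * x a = HH d θ * btil θ m + HH d θ * θ mF
          - HH d θ * x mF - HH d θ * r := by rw [hxa]; ring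
      rw [hGx]
      by_cases hrs : r = 0 ∧ x mF = θ mF + 1
      · exfalso
        apply hne
        have hzero : ∀ i ∈ (univ.filter (fun i : Fin d => (i:ℕ) < m)).erase a, x i = 0 := by
          have := (Finset.sum_eq_zero_iff_of_nonneg (fun i _ => hx.1 i)).1 (hrdef.symm.trans hrs.1)
          intro i hi
          exact this i hi
        funext i
        unfold Vpt
        by_cases h1 : (i:ℕ) = (a:ℕ)
        · have : i = a := Fin.val_injective h1
          rw [if_pos h1, this]
          omega
        · rw [if_neg h1]
          by_cases h2 : (i:ℕ) = m
          · have : i = mF := Fin.val_injective h2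
            rw [if_pos h2, this]
            exact hrs.2
          · rw [if_neg h2]
            by_cases h3 : m < (i:ℕ)
            · rw [if_pos h3]
              exact htail i h3
            · rw [if_neg h3]
              apply hzero
              rw [Finset.mem_erase]
              exact ⟨fun hc => h1 (by rw [hc]), Finset.mem_filter.2 ⟨Finset.mem_univ _, by omega⟩⟩
      · -- strictness
        rcases eq_or_lt_of_le hs0 with hseq | hslt
        · -- x mF = θ mF : need r ≥ 1
          have hr1 : 1 ≤ r := by
            rcases eq_or_lt_of_le hr0 with h0 | h0
            swap
            · omega
            · exfalso
              have hzero : ∀ i ∈ (univ.filter (fun i : Fin d => (i:ℕ) < m)).erase a, x i = 0 := by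
                have := (Finset.sum_eq_zero_iff_of_nonneg (fun i _ => hx.1 i)).1 (hrdef.symm.trans h0.symm)
                intro i hi
                exact this i hi
              have hin : ∀ i : Fin d, (i:ℕ) < m → i ≠ a → x i = 0 := by
                intro i h1 h2
                apply hzero
                rw [Finset.mem_erase]
                exact ⟨h2, Finset.mem_filter.2 ⟨Finset.mem_univ _, h1⟩⟩
              set mm1 : Fin d := ⟨m-1, by omega⟩ with hmm1def
              have hmm1v : ((mm1 : Fin d) : ℕ) = m - 1 := rfl
              have hmm1a : mm1 ≠ a := by
                intro hc
                have := congrArg Fin.val hc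
                rw [hmm1v] at this
                omega
              have hxmm1 : x mm1 = 0 := hin mm1 (by rw [hmm1v]; omega) hmm1a
              rcases hlex with heq | ⟨m'', h1'', h2''⟩
              · have := congrFun heq mm1
                rw [hxmm1] at this
                linarith [hθ mm1]
              · rcases lt_trichotomy ((m'':ℕ)) m with h | h | h
                · by_cases hma : m'' = a
                  · have := h2'' mm1 (by rw [Fin.lt_def, hmm1v, hma]; omega)
                    rw [hxmm1] at this
                    linarith [hθ mm1]
                  · have := hin m'' h hma
                    linarith [hθ m'']
                · have : m'' = mF := Fin.val_injective (by rw [hmFv]; exact h)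
                  rw [this] at h1''
                  omega
                · have := htail m'' h
                  omega
          have hHr1 : HH d θ ≤ HH d θ * r := le_mul_of_one_le_right (le_of_lt hH0) hr1
          have hMmH : MM θ^m < HH d θ := M_pow_lt_H hθ hd1 (by omega)
          have hHxm : HH d θ * x mF = HH d θ * θ mF := by rw [← hseq]
          have hMxm : MM θ^m * x mF = MM θ^m * θ mF := by rw [← hseq]
          linarith
        · -- θ mF + 1 ≤ x mF
          have hne2 : ¬ (r = 0 ∧ x mF = θ mF + 1) := hrs
          have hHr0 : 0 ≤ HH d θ * r := mul_nonneg (le_of_lt hH0) hr0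
          have hMs0 : 0 ≤ MM θ^m * (x mF - θ mF - 1) :=
            mul_nonneg (le_of_lt (hMpos m)) (by omega)
          rcases Decidable.em (r = 0) with hr | hr
          · -- then x mF ≥ θ mF + 2
            have hxm2 : θ mF + 2 ≤ x mF := by
              rcases eq_or_lt_of_le (show θ mF + 1 ≤ x mF by omega) with h | h
              · exact absurd ⟨hr, h.symm⟩ hne2
              · omega
            have hMs1 : MM θ^m ≤ MM θ^m * (x mF - θ mF - 1) :=
              le_mul_of_one_le_right (le_of_lt (hMpos m)) (by omega)
            nlinarith [hMpos m]
          · have hr1 : 1 ≤ r := by omega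
            have hHr1 : HH d θ ≤ HH d θ * r := le_mul_of_one_le_right (le_of_lt hH0) hr1
            nlinarith [hMpos m]
    · -- tail differs above m
      push_neg at htail
      obtain ⟨k0, hk0m, hk0⟩ := htail
      obtain ⟨m', hmm', hm'1, hm'2⟩ := witness_gt mF hlex k0 (by rw [hmFv]; exact hk0m) hk0
      rw [hmFv] at hmm'
      -- split G at m'
      have hm'G : m' ∈ univ.filter (fun i : Fin d => m < (i:ℕ)) :=
        Finset.mem_filter.2 ⟨Finset.mem_univ _, hmm'⟩
      have hsplitG := fun (f : Fin d → ℤ) =>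
        sum_split3s (univ.filter (fun i : Fin d => m < (i:ℕ))) m' hm'G f
      have hset1 : (univ.filter (fun i : Fin d => m < (i:ℕ))).filter
            (fun i : Fin d => (i:ℕ) < (m':ℕ))
          = univ.filter (fun i : Fin d => m < (i:ℕ) ∧ (i:ℕ) < (m':ℕ)) := by
        rw [Finset.filter_filter]
      have hset2 : (univ.filter (fun i : Fin d => m < (i:ℕ))).filter
            (fun i : Fin d => (m':ℕ) < (i:ℕ))
          = univ.filter (fun i : Fin d => (m':ℕ) < (i:ℕ)) := by
        rw [Finset.filter_filter]
        apply Finset.filter_congr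
        intro i _
        first
        | omega
        | (simp only [eq_iff_iff]; omega)
      set G1 := univ.filter (fun i : Fin d => m < (i:ℕ) ∧ (i:ℕ) < (m':ℕ)) with hG1
      set G2 := univ.filter (fun i : Fin d => (m':ℕ) < (i:ℕ)) with hG2
      have hsplitx := hsplitG (fun i => (HH d θ - MM θ^(i:ℕ)) * x i)
      have hsplitθ := hsplitG (fun i => (HH d θ - MM θ^(i:ℕ)) * θ i)
      rw [hset1, hset2] at hsplitx hsplitθ
      have hQ : ∑ i ∈ G2, (HH d θ - MM θ^(i:ℕ)) * x i
          = ∑ i ∈ G2, (HH d θ - MM θ^(i:ℕ)) * θ i := by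
        apply Finset.sum_congr rfl
        intro i hi
        simp only [hG2, Finset.mem_filter, Finset.mem_univ, true_and] at hi
        rw [hm'2 i hi]
      have heG1x := expand_sub (θ := θ) G1 x
      have heG1θ := expand_sub (θ := θ) G1 θ
      have hP4 : 0 ≤ ∑ i ∈ G1, MM θ^(i:ℕ) * x i :=
        Finset.sum_nonneg (fun i _ => mul_nonneg (le_of_lt (hMpos _)) (hx.1 i))
      -- geometric bound over insert mF G1
      have hmFG1 : mF ∉ G1 := by
        intro hc
        rw [hG1, Finset.mem_filter] at hc
        have := hc.2.1
        rw [hmFv] at this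
        omega
      have hgeom1 : MM θ^m * (θ mF + 1) + ∑ i ∈ G1, MM θ^(i:ℕ) * θ i ≤ MM θ^((m':ℕ)) - 1 := by
        set t : Fin d → ℤ := fun i => if (i:ℕ) = m then θ i + 1 else θ i with ht
        have hgb : ∑ i ∈ insert mF G1, MM θ^(i:ℕ) * t i ≤ MM θ^((m':ℕ)) - 1
            := geom_bound hθ (m':ℕ) (insert mF G1) t
          (fun i _ => by rw [ht]; simp only; split_ifs <;> linarith [hθ i])
          (fun i _ => by
            rw [ht]; simp only
            split_ifs
            · linarith [theta_lt_b hθ (by omega) i]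
            · exact theta_le_b hθ i)
          (fun i hi => by
            rcases Finset.mem_insert.1 hi with rfl | hi
            · rw [hmFv]; exact hmm'
            · rw [hG1, Finset.mem_filter] at hi
              exact hi.2.2)
        rw [Finset.sum_insert hmFG1] at hgb
        have ht1 : MM θ^((mF:ℕ)) * t mF = MM θ^m * (θ mF + 1) := by
          have h1 : t mF = θ mF + 1 := by
            show (if ((mF : Fin d):ℕ) = m then θ mF + 1 else θ mF) = θ mF + 1
            rw [if_pos hmFv]
          rw [h1, hmFv]
        have ht2 : ∀ i ∈ G1, MM θ^(i:ℕ) * t i = MM θ^(i:ℕ) * θ i := by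
          intro i hi
          rw [hG1, Finset.mem_filter] at hi
          rw [ht]
          simp only
          rw [if_neg (by omega)]
        rw [ht1, Finset.sum_congr rfl ht2] at hgb
        exact hgb
      have hstep : MM θ^((m':ℕ)) * (θ m' + 1) ≤ MM θ^((m':ℕ)) * x m' :=
        mul_le_mul_of_nonneg_left (by omega) (le_of_lt (hMpos _))
      -- head identity at m'
      have hhead' : (∑ i ∈ univ.filter (fun i : Fin d => (i:ℕ) < (m':ℕ)), x i) + x m'
          = btil θ ((m':ℕ)+1) := level_b_head hsum m' (fun k hk => hm'2 k hk)
      have haL' : a ∈ univ.filter (fun i : Fin d => (i:ℕ) < (m':ℕ)) :=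
        Finset.mem_filter.2 ⟨Finset.mem_univ _, by omega⟩
      have her' : x a + ∑ i ∈ (univ.filter (fun i : Fin d => (i:ℕ) < (m':ℕ))).erase a, x i
          = ∑ i ∈ univ.filter (fun i : Fin d => (i:ℕ) < (m':ℕ)), x i :=
        Finset.add_sum_erase _ x haL'
      set r' : ℤ := ∑ i ∈ (univ.filter (fun i : Fin d => (i:ℕ) < (m':ℕ))).erase a, x i with hr'def
      -- mF and G1 sit inside the erase set
      have hsub : x mF + ∑ i ∈ G1, x i ≤ r' := by
        have hins : insert mF G1 ⊆ (univ.filter (fun i : Fin d => (i:ℕ) < (m':ℕ))).erase a := by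
          intro i hi
          rw [Finset.mem_erase, Finset.mem_filter]
          rcases Finset.mem_insert.1 hi with rfl | hi
          · refine ⟨?_, Finset.mem_univ _, by rw [hmFv]; exact hmm'⟩
            intro hc
            have := congrArg Fin.val hc
            rw [hmFv] at this
            omega
          · rw [hG1, Finset.mem_filter] at hi
            refine ⟨?_, Finset.mem_univ _, hi.2.2⟩
            intro hc
            have := congrArg Fin.val hc
            omega
        calc x mF + ∑ i ∈ G1, x i = ∑ i ∈ insert mF G1, x i := (Finset.sum_insert hmFG1).symm
        _ ≤ r' := Finset.sum_le_sum_of_subset_of_nonneg hins (fun i _ _ => hx.1 i)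
      have hr'0 : 0 ≤ r' := Finset.sum_nonneg (fun i _ => hx.1 i)
      have hxa : x a = btil θ ((m':ℕ)+1) - x m' - r' := by linarith [her', hhead']
      have hHxa : HH d θ * x a = HH d θ * btil θ ((m':ℕ)+1) - HH d θ * x m'
          - HH d θ * r' := by rw [hxa]; ring
      have hreg : btil θ ((m':ℕ)+1) = btil θ (m+1) + (∑ i ∈ G1, θ i) + θ m' := by
        have := btil_region (θ := θ) mF m' (by rw [hmFv]; exact hmm')
        rw [hG1]
        exact this
      have hbt : btil θ (m+1) = btil θ m + θ mF := btil_split mF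
      have hHreg : HH d θ * btil θ ((m':ℕ)+1) = HH d θ * btil θ m + HH d θ * θ mF
          + HH d θ * (∑ i ∈ G1, θ i) + HH d θ * θ m' := by rw [hreg, hbt]; ring
      have hHsub : HH d θ * x mF + HH d θ * (∑ i ∈ G1, x i) ≤ HH d θ * r' := by
        have := mul_le_mul_of_nonneg_left hsub (le_of_lt hH0)
        nlinarith
      have hxm0 : 0 ≤ MM θ^m * x mF := mul_nonneg (le_of_lt (hMpos m)) (hx.1 mF)
      rw [hsplitx, hsplitθ, hQ, heG1x, heG1θ]
      nlinarith [hgeom1, hstep, hHxa, hHreg, hHsub, hP4, hxm0, hMpos m, hMpos ((m':ℕ))]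
end Grevlex
namespace Grevlex
variable {d : ℕ} {θ : Fin d → ℤ}

lemma zero_mem (hθ : ∀ i, 1 ≤ θ i) (hd : 1 ≤ d) : (0 : Fin d → ℤ) ∈ SQ d θ := by
  refine ⟨fun i => le_refl 0, Or.inl ?_⟩
  have h1 : (∑ i : Fin d, (0:ℤ)) = 0 := by simp
  have h2 : (d:ℤ) ≤ ∑ i, θ i := b_ge_d hθ
  have h3 : (1:ℤ) ≤ (d:ℤ) := by exact_mod_cast hd
  show (∑ i : Fin d, (0 : Fin d → ℤ) i) < ∑ i, θ i
  simpa using by linarith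

lemma strictmax_zero (hθ : ∀ i, 1 ≤ θ i) :
    ∀ x ∈ SQ d θ, x ≠ 0 → ∑ i, (-1 : ℤ) * x i < ∑ i, (-1 : ℤ) * (0 : Fin d → ℤ) i := by
  intro x hx hne
  have h0 : (∑ i : Fin d, (-1 : ℤ) * (0 : Fin d → ℤ) i) = 0 := by simp
  rw [h0]
  have h1 : ∑ i, (-1:ℤ) * x i = - ∑ i, x i := by
    rw [← Finset.sum_neg_distrib]
    exact Finset.sum_congr rfl (fun i _ => by ring)
  rw [h1]
  have h2 : ∃ j, x j ≠ 0 := by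
    by_contra hc
    push_neg at hc
    exact hne (funext fun i => hc i)
  obtain ⟨j, hj⟩ := h2
  have h3 : x j ≤ ∑ i, x i := Finset.single_le_sum (fun i _ => hx.1 i) (Finset.mem_univ j)
  have := hx.1 j
  omega

lemma strictmax_W (hθ : ∀ i, 1 ≤ θ i) (hd : 3 ≤ d) {a : Fin d} (had : (a:ℕ) + 2 ≤ d) :
    ∀ x ∈ SQ d θ, x ≠ Vpt θ a d → ∑ i, cW a i * x i < ∑ i, cW a i * Vpt θ a d i := by
  intro x hx hne
  have hd1 : 1 ≤ d := by omega
  have hpa : Vpt θ a d a = bsum θ - 1 := by rw [Vpt_apply_a, btil_d]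
  have hpsum : ∑ i, Vpt θ a d i = bsum θ - 1 := by
    rw [Vpt_sum hθ had (le_refl d), if_pos rfl]
  have heqp : ∑ i, cW a i * Vpt θ a d i = bsum θ - 1 := by
    rw [cW_sum, hpa, hpsum]; ring
  rw [heqp, cW_sum]
  have hxa : x a ≤ ∑ i, x i := Finset.single_le_sum (fun i _ => hx.1 i) (Finset.mem_univ a)
  have her : x a + ∑ i ∈ univ.erase a, x i = ∑ i, x i :=
    Finset.add_sum_erase _ x (Finset.mem_univ a)
  have her0 : 0 ≤ ∑ i ∈ univ.erase a, x i := Finset.sum_nonneg (fun i _ => hx.1 i)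
  rcases hx.2 with hlt | ⟨hsum, hlex⟩
  · -- level < b
    have hSig : ∑ i, x i ≤ bsum θ - 1 := by
      have : bsum θ = ∑ i, θ i := rfl
      omega
    by_contra hcon
    push_neg at hcon
    apply hne
    have hxa1 : x a = bsum θ - 1 := by omega
    have hzero : ∀ i ∈ univ.erase a, x i = 0 :=
      fun i hi => (Finset.sum_eq_zero_iff_of_nonneg (fun i _ => hx.1 i)).1 (by omega) i hi
    funext i
    unfold Vpt
    by_cases h1 : (i:ℕ) = (a:ℕ)
    · have : i = a := Fin.val_injective h1
      rw [if_pos h1, this, hxa1, btil_d]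
    · rw [if_neg h1]
      have hid := i.isLt
      rw [if_neg (by omega), if_neg (by omega)]
      exact hzero i (Finset.mem_erase.2 ⟨fun hc => h1 (by rw [hc]), Finset.mem_univ _⟩)
  · -- level b
    have hsum' : ∑ i, x i = bsum θ := hsum
    have hxab : x a ≤ bsum θ - 1 := by
      by_contra hc
      push_neg at hc
      have hxa2 : x a = bsum θ := by omega
      have hzero : ∀ i ∈ univ.erase a, x i = 0 :=
        fun i hi => (Finset.sum_eq_zero_iff_of_nonneg (fun i _ => hx.1 i)).1 (by omega) i hi
      have hin : ∀ i : Fin d, i ≠ a → x i = 0 :=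
        fun i hi => hzero i (Finset.mem_erase.2 ⟨hi, Finset.mem_univ _⟩)
      set dm1 : Fin d := ⟨d-1, by omega⟩ with hdm1def
      have hdm1v : ((dm1 : Fin d) : ℕ) = d - 1 := rfl
      have hdm1a : dm1 ≠ a := by
        intro hc2
        have := congrArg Fin.val hc2
        rw [hdm1v] at this
        omega
      have hxdm1 : x dm1 = 0 := hin dm1 hdm1a
      rcases hlex with heq | ⟨m'', h1'', h2''⟩
      · have := congrFun heq dm1
        rw [hxdm1] at this
        linarith [hθ dm1]
      · by_cases hma : m'' = a
        · have := h2'' dm1 (by rw [Fin.lt_def, hdm1v, hma]; omega)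
          rw [hxdm1] at this
          linarith [hθ dm1]
        · have := hin m'' hma
          linarith [hθ m'']
    linarith [b_ge_d hθ, show (3:ℤ) ≤ (d:ℤ) from by exact_mod_cast hd]

lemma btil_zero : btil θ 0 = 0 := by
  unfold btil
  apply Finset.sum_eq_zero
  intro i hi
  simp only [Finset.mem_filter] at hi
  omega

lemma btil_one (hd : 0 < d) : btil θ 1 = θ ⟨0, hd⟩ := by
  have h := btil_split (θ := θ) ⟨0, hd⟩
  have h0 : ((⟨0, hd⟩ : Fin d) : ℕ) = 0 := rfl
  rw [h0] at h
  rw [h, btil_zero]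
  ring

lemma uQ_two (hd : 0 < d) : uQ d θ 2 = θ := by
  funext i
  unfold uQ
  by_cases h : (i:ℕ) = 2 - 2
  · rw [if_pos h]
    have : i = ⟨0, hd⟩ := Fin.val_injective h
    rw [this, btil_one hd]
  · rw [if_neg h, if_pos (by omega)]

lemma uQ_top : uQ d θ (d+1) = (fun i : Fin d => if (i:ℕ) = d - 1 then bsum θ else 0) := by
  funext i
  unfold uQ
  have hid := i.isLt
  by_cases h : (i:ℕ) = d + 1 - 2
  · rw [if_pos h, if_pos (by omega)]
    have h2 : d + 1 - 1 = d := by omega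
    rw [h2, btil_d]
  · rw [if_neg h, if_neg (by omega), if_neg (by omega)]

lemma vQ_top (j : ℕ) (hj1 : 1 ≤ j) (hjd : j ≤ d - 1) :
    vQ d θ j (d+1) = fun i : Fin d => if (i:ℕ) = j - 1 then bsum θ - 1 else 0 := by
  funext i
  unfold vQ
  have hid := i.isLt
  by_cases h : (i:ℕ) = j - 1
  · rw [if_pos h, if_pos h]
    congr 1
    have : d + 1 - 1 = d := by omega
    rw [this, btil_d]
  · rw [if_neg h, if_neg h, if_neg (by omega), if_neg (by omega)]

lemma grevlexQ_eq : grevlexQ d θ = convexHull ℝ (toR '' SQ d θ) := by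
  unfold grevlexQ
  rw [genset_eq]

end Grevlex
namespace Grevlex
variable {d : ℕ} {θ : Fin d → ℤ}

def pt (x : Fin d → ℤ) (i j : Fin d) : Fin d → ℤ :=
  fun l => x l + (if l = i then 1 else 0) - (if l = j then 1 else 0)

lemma pt_sum (x : Fin d → ℤ) (i j : Fin d) : ∑ l, pt x i j l = ∑ l, x l := by
  unfold pt
  rw [Finset.sum_sub_distrib, Finset.sum_add_distrib]
  simp

lemma pt_mid (x : Fin d → ℤ) (i j : Fin d) (l : Fin d) :
    pt x i j l + pt x j i l = x l + x l := by unfold pt; ring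

lemma pt_ne (x : Fin d → ℤ) {i j : Fin d} (h : i ≠ j) : pt x i j ≠ pt x j i := by
  intro hc
  have h1 := congrFun hc i
  unfold pt at h1
  rw [if_pos rfl, if_neg h] at h1
  omega

lemma pt_apply_other {x : Fin d → ℤ} {i j l : Fin d} (hli : l ≠ i) (hlj : l ≠ j) :
    pt x i j l = x l := by unfold pt; rw [if_neg hli, if_neg hlj]; ring

lemma pt_apply_i {x : Fin d → ℤ} {i j : Fin d} (hij : i ≠ j) : pt x i j i = x i + 1 := by
  unfold pt; rw [if_pos rfl, if_neg hij]; ring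

lemma pt_apply_j {x : Fin d → ℤ} {i j : Fin d} (hij : i ≠ j) : pt x i j j = x j - 1 := by
  unfold pt; rw [if_pos rfl, if_neg (fun h => hij h.symm)]; ring

lemma pt_nonneg {x : Fin d → ℤ} (hx : ∀ l, 0 ≤ x l) {i j : Fin d} (hij : i ≠ j)
    (hj : 1 ≤ x j) : ∀ l, 0 ≤ pt x i j l := by
  intro l
  by_cases h1 : l = i
  · subst h1; rw [pt_apply_i hij]; linarith [hx l]
  · by_cases h2 : l = j
    · subst h2; rw [pt_apply_j hij]; omega
    · rw [pt_apply_other h1 h2]; exact hx l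

lemma mem_b_of {y : Fin d → ℤ} (hy0 : ∀ l, 0 ≤ y l) (hsum : ∑ l, y l = ∑ l, θ l)
    (m : Fin d) (h1 : θ m < y m) (h2 : ∀ k : Fin d, m < k → y k = θ k) : y ∈ SQ d θ :=
  ⟨hy0, Or.inr ⟨hsum, Or.inr ⟨m, h1, fun k hk => (h2 k hk).symm⟩⟩⟩

def sgl (i : Fin d) (t : ℤ) : Fin d → ℤ := fun l => if l = i then t else 0

lemma sgl_sum (i : Fin d) (t : ℤ) : ∑ l, sgl i t l = t := by
  unfold sgl
  simp

lemma sgl_nonneg {i : Fin d} {t : ℤ} (h : 0 ≤ t) : ∀ l, 0 ≤ sgl i t l := by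
  intro l
  unfold sgl
  split_ifs <;> omega

lemma sgl_mem_lt {i : Fin d} {t : ℤ} (h0 : 0 ≤ t) (hlt : t < ∑ l, θ l) :
    sgl i t ∈ SQ d θ := ⟨sgl_nonneg h0, Or.inl (by rw [sgl_sum]; exact hlt)⟩

lemma Upt_zero (hd : 0 < d) : Upt θ ⟨0, hd⟩ = θ := by
  funext i
  unfold Upt
  have h0 : ((⟨0, hd⟩ : Fin d) : ℕ) = 0 := rfl
  rw [h0]
  by_cases h : (i:ℕ) = 0
  · rw [if_pos h]
    have : i = ⟨0, hd⟩ := Fin.val_injective h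
    rw [this, btil_one hd]
  · rw [if_neg h, if_pos (by omega)]

/-- Every point of `S` is either one of the claimed vertices, or a midpoint of two
other points of `S`. -/
lemma classify (hθ : ∀ i, 1 ≤ θ i) (hd : 3 ≤ d) {x : Fin d → ℤ} (hx : x ∈ SQ d θ) :
    (x = 0 ∨ (∃ m : Fin d, x = Upt θ m)
      ∨ (∃ (a : Fin d) (m : ℕ), (a:ℕ) + 2 ≤ m ∧ m ≤ d ∧ x = Vpt θ a m))
    ∨ ∃ y z : Fin d → ℤ, y ∈ SQ d θ ∧ z ∈ SQ d θ ∧ y ≠ z ∧ ∀ l, y l + z l = x l + x l := by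
  have hd0 : 0 < d := by omega
  have hbd : (d:ℤ) ≤ bsum θ := b_ge_d hθ
  have hd3 : (3:ℤ) ≤ (d:ℤ) := by exact_mod_cast hd
  have hbs : bsum θ = ∑ l, θ l := rfl
  rcases hx.2 with hlt | ⟨hsum, hlex⟩
  · -- level < b
    by_cases hx0 : x = 0
    · exact Or.inl (Or.inl hx0)
    have hex : ∃ i, 1 ≤ x i := by
      by_contra hc
      push_neg at hc
      exact hx0 (funext fun i => by
        have h1 := hx.1 i
        have h2 := hc i
        show x i = 0
        omega)
    obtain ⟨i, hi⟩ := hex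
    by_cases h2 : ∃ j, j ≠ i ∧ 1 ≤ x j
    · obtain ⟨j, hji, hj⟩ := h2
      refine Or.inr ⟨pt x i j, pt x j i, ?_, ?_, pt_ne x (fun h => hji h.symm), pt_mid x i j⟩
      · exact ⟨pt_nonneg hx.1 (fun h => hji h.symm) hj, Or.inl (by rw [pt_sum]; exact hlt)⟩
      · exact ⟨pt_nonneg hx.1 hji hi, Or.inl (by rw [pt_sum]; exact hlt)⟩
    · push_neg at h2
      have hin : ∀ j, j ≠ i → x j = 0 := by
        intro j hj
        have := h2 j hj
        have := hx.1 j
        omega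
      have hxs : x = sgl i (x i) := by
        funext l
        by_cases h : l = i
        · subst h; simp [sgl]
        · simp only [sgl, if_neg h]; exact hin l h
      have hts : ∑ l, x l = x i := by
        conv_lhs => rw [hxs]
        rw [sgl_sum]
      by_cases ht2 : x i ≤ bsum θ - 2
      · refine Or.inr ⟨sgl i (x i - 1), sgl i (x i + 1),
          sgl_mem_lt (by omega) (by omega), sgl_mem_lt (by omega) (by omega), ?_, ?_⟩
        · intro hc
          have := congrFun hc i
          unfold sgl at this
          rw [if_pos rfl, if_pos rfl] at this
          omega
        · intro l
          have hl := congrFun hxs l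
          unfold sgl at hl ⊢
          by_cases h : l = i
          · rw [if_pos h, if_pos h, hl, if_pos h]; ring
          · rw [if_neg h, if_neg h, hl, if_neg h]
      · have ht3 : x i = bsum θ - 1 := by omega
        by_cases had : (i:ℕ) + 2 ≤ d
        · refine Or.inl (Or.inr (Or.inr ⟨i, d, had, le_refl d, ?_⟩))
          rw [hxs]
          funext l
          unfold sgl Vpt
          have hld := l.isLt
          by_cases h : (l:ℕ) = (i:ℕ)
          · have : l = i := Fin.val_injective h
            rw [if_pos this, if_pos h, btil_d, ht3]
          · have : l ≠ i := fun hc => h (by rw [hc])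
            rw [if_neg this, if_neg h, if_neg (by omega), if_neg (by omega)]
        · have hieq : (i:ℕ) = d - 1 := by have := i.isLt; omega
          refine Or.inr ⟨sgl i (bsum θ - 2), sgl i (bsum θ),
            sgl_mem_lt (by omega) (by omega), ?_, ?_, ?_⟩
          · refine ⟨sgl_nonneg (by omega), Or.inr ⟨by rw [sgl_sum, hbs], Or.inr ⟨i, ?_, ?_⟩⟩⟩
            · unfold sgl
              rw [if_pos rfl]
              linarith [theta_lt_b hθ (by omega) i]
            · intro k hk
              have hk' : (i:ℕ) < (k:ℕ) := hk
              have := k.isLt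
              exact absurd hk' (by omega)
          · intro hc
            have := congrFun hc i
            unfold sgl at this
            rw [if_pos rfl, if_pos rfl] at this
            omega
          · intro l
            have hl := congrFun hxs l
            unfold sgl at hl ⊢
            by_cases h : l = i
            · rw [if_pos h, if_pos h, hl, if_pos h, ht3]; ring
            · rw [if_neg h, if_neg h, hl, if_neg h]
  · -- level = b
    rcases hlex with heq | ⟨m, hm1, hm2⟩
    · refine Or.inl (Or.inr (Or.inl ⟨⟨0, hd0⟩, ?_⟩))
      rw [Upt_zero hd0, ← heq]
    · have htail : ∀ k : Fin d, (m:ℕ) < (k:ℕ) → x k = θ k :=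
        fun k hk => (hm2 k (Fin.lt_def.mpr hk)).symm
      have hhead := level_b_head hsum m htail
      by_cases hh : ∀ i : Fin d, (i:ℕ) < (m:ℕ) → x i = 0
      · refine Or.inl (Or.inr (Or.inl ⟨m, ?_⟩))
        have hSL : ∑ i ∈ univ.filter (fun i : Fin d => (i:ℕ) < (m:ℕ)), x i = 0 :=
          Finset.sum_eq_zero (fun i hi => hh i (by
            simp only [Finset.mem_filter, Finset.mem_univ, true_and] at hi; exact hi))
        funext i
        unfold Upt
        rcases lt_trichotomy ((i:ℕ)) ((m:ℕ)) with h | h | h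
        · rw [if_neg (by omega), if_neg (by omega)]
          exact hh i h
        · have : i = m := Fin.val_injective h
          rw [if_pos h, this]
          omega
        · rw [if_neg (by omega), if_pos h]
          exact htail i h
      · push_neg at hh
        obtain ⟨a, ham, ha0⟩ := hh
        have ha1 : 1 ≤ x a := by have := hx.1 a; omega
        have hma : m ≠ a := fun h => by rw [h] at ham; omega
        have ham' : a ≠ m := fun h => hma h.symm
        by_cases hh2 : ∃ j : Fin d, (j:ℕ) < (m:ℕ) ∧ j ≠ a ∧ 1 ≤ x j
        · obtain ⟨j, hjm, hja, hj1⟩ := hh2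
          have haj : a ≠ j := fun h => hja h.symm
          refine Or.inr ⟨pt x a j, pt x j a, ?_, ?_, pt_ne x haj, pt_mid x a j⟩
          · refine mem_b_of (pt_nonneg hx.1 haj hj1) (by rw [pt_sum]; exact hsum) m ?_ ?_
            · rw [pt_apply_other hma (fun h => by rw [h] at hjm; omega)]
              exact hm1
            · intro k hk
              have hk' : (m:ℕ) < (k:ℕ) := hk
              rw [pt_apply_other (fun h => by rw [h] at hk'; omega)
                (fun h => by rw [h] at hk'; omega)]
              exact htail k hk'
          · refine mem_b_of (pt_nonneg hx.1 hja ha1) (by rw [pt_sum]; exact hsum) m ?_ ?_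
            · rw [pt_apply_other (fun h => by rw [h] at hjm; omega) hma]
              exact hm1
            · intro k hk
              have hk' : (m:ℕ) < (k:ℕ) := hk
              rw [pt_apply_other (fun h => by rw [h] at hk'; omega)
                (fun h => by rw [h] at hk'; omega)]
              exact htail k hk'
        · push_neg at hh2
          have hin : ∀ j : Fin d, (j:ℕ) < (m:ℕ) → j ≠ a → x j = 0 := by
            intro j h1 h2
            have := hh2 j h1 h2
            have := hx.1 j
            omega
          have haL : a ∈ univ.filter (fun i : Fin d => (i:ℕ) < (m:ℕ)) :=
            Finset.mem_filter.2 ⟨Finset.mem_univ _, ham⟩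
          have hera : ∑ i ∈ univ.filter (fun i : Fin d => (i:ℕ) < (m:ℕ)), x i = x a := by
            rw [← Finset.add_sum_erase _ x haL]
            have : ∑ i ∈ (univ.filter (fun i : Fin d => (i:ℕ) < (m:ℕ))).erase a, x i = 0 := by
              apply Finset.sum_eq_zero
              intro i hi
              rw [Finset.mem_erase, Finset.mem_filter] at hi
              exact hin i hi.2.2 hi.1
            rw [this]
            ring
          have hxa : x a = btil θ ((m:ℕ)+1) - x m := by rw [← hhead, hera]; ring
          have hbt : btil θ ((m:ℕ)+1) = btil θ (m:ℕ) + θ m := btil_split m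
          by_cases hs2 : θ m + 2 ≤ x m
          · refine Or.inr ⟨pt x m a, pt x a m, ?_, ?_, pt_ne x hma, pt_mid x m a⟩
            · refine mem_b_of (pt_nonneg hx.1 hma ha1) (by rw [pt_sum]; exact hsum) m ?_ ?_
              · rw [pt_apply_i hma]; omega
              · intro k hk
                have hk' : (m:ℕ) < (k:ℕ) := hk
                rw [pt_apply_other (fun h => by rw [h] at hk'; omega)
                  (fun h => by rw [h] at hk'; omega)]
                exact htail k hk'
            · refine mem_b_of (pt_nonneg hx.1 ham' (by have := hθ m; omega)) (by rw [pt_sum]; exact hsum) m ?_ ?_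
              · rw [pt_apply_j ham']; omega
              · intro k hk
                have hk' : (m:ℕ) < (k:ℕ) := hk
                rw [pt_apply_other (fun h => by rw [h] at hk'; omega)
                  (fun h => by rw [h] at hk'; omega)]
                exact htail k hk'
          · have hxm : x m = θ m + 1 := by omega
            have hxa2 : x a = btil θ (m:ℕ) - 1 := by omega
            by_cases ha2 : (a:ℕ) + 2 ≤ (m:ℕ)
            · refine Or.inl (Or.inr (Or.inr ⟨a, (m:ℕ), ha2, le_of_lt m.isLt, ?_⟩))
              funext i
              unfold Vpt
              by_cases h1 : (i:ℕ) = (a:ℕ)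
              · have : i = a := Fin.val_injective h1
                rw [if_pos h1, this, hxa2]
              · rw [if_neg h1]
                by_cases h2 : (i:ℕ) = (m:ℕ)
                · have : i = m := Fin.val_injective h2
                  rw [if_pos h2, this]
                  exact hxm
                · rw [if_neg h2]
                  by_cases h3 : (m:ℕ) < (i:ℕ)
                  · rw [if_pos h3]
                    exact htail i h3
                  · rw [if_neg h3]
                    exact hin i (by omega) (fun hc => h1 (by rw [hc]))
            · have ham1 : (a:ℕ) + 1 = (m:ℕ) := by omega
              refine Or.inr ⟨pt x m a, pt x a m, ?_, ?_, pt_ne x hma, pt_mid x m a⟩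
              · refine mem_b_of (pt_nonneg hx.1 hma ha1) (by rw [pt_sum]; exact hsum) m ?_ ?_
                · rw [pt_apply_i hma]; omega
                · intro k hk
                  have hk' : (m:ℕ) < (k:ℕ) := hk
                  rw [pt_apply_other (fun h => by rw [h] at hk'; omega)
                    (fun h => by rw [h] at hk'; omega)]
                  exact htail k hk'
              · -- pt x a m is U_{m-1}-like or θ
                refine ⟨pt_nonneg hx.1 ham' (by have := hθ m; omega), Or.inr ⟨by rw [pt_sum]; exact hsum, ?_⟩⟩
                have hza : pt x a m a = btil θ (m:ℕ) := by rw [pt_apply_i ham']; omega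
                have hzm : pt x a m m = θ m := by rw [pt_apply_j ham']; omega
                have hzk : ∀ k : Fin d, (m:ℕ) < (k:ℕ) → pt x a m k = θ k := by
                  intro k hk'
                  rw [pt_apply_other (fun h => by rw [h] at hk'; omega)
                    (fun h => by rw [h] at hk'; omega)]
                  exact htail k hk'
                have hz0 : ∀ k : Fin d, (k:ℕ) < (m:ℕ) → k ≠ a → pt x a m k = 0 := by
                  intro k h1 h2
                  rw [pt_apply_other h2 (fun h => by rw [h] at h1; omega)]
                  exact hin k h1 h2
                rcases eq_or_lt_of_le (theta_le_btil hθ ham) with hba | hba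
                · -- pt x a m = θ
                  left
                  funext k
                  rcases lt_trichotomy ((k:ℕ)) ((m:ℕ)) with h | h | h
                  · by_cases hka : k = a
                    · rw [hka, hza, ← hba]
                    · exfalso
                      have h4 := theta_add_le_btil hθ (show a ≠ k from fun hc => hka hc.symm) ham h
                      have := hθ k
                      omega
                  · have : k = m := Fin.val_injective h
                    rw [this, hzm]
                  · exact (hzk k h).symm
                · -- witness a
                  right
                  refine ⟨a, by rw [hza]; exact hba, ?_⟩
                  intro k hk
                  have hk' : (a:ℕ) < (k:ℕ) := hk
                  rcases lt_trichotomy ((k:ℕ)) ((m:ℕ)) with h | h | h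
                  · omega
                  · have : k = m := Fin.val_injective h
                    rw [this, hzm]
                  · exact (hzk k h).symm
end Grevlex
namespace Grevlex
variable {d : ℕ} {θ : Fin d → ℤ}

lemma cast_dot (c : Fin d → ℤ) (y : Fin d → ℤ) :
    ∑ i, ((c i : ℝ)) * toR y i = ((∑ i, c i * y i : ℤ) : ℝ) := by
  rw [Int.cast_sum]
  exact Finset.sum_congr rfl (fun i _ => by simp [toR])

lemma extreme_of_strict_max_int (c : Fin d → ℤ) (p : Fin d → ℤ) (hp : p ∈ SQ d θ)
    (h : ∀ x ∈ SQ d θ, x ≠ p → ∑ i, c i * x i < ∑ i, c i * p i) :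
    toR p ∈ (convexHull ℝ (toR '' SQ d θ)).extremePoints ℝ := by
  refine extreme_of_strict_max (toR '' SQ d θ) (fun i => (c i : ℝ)) (toR p) ⟨p, hp, rfl⟩ ?_
  rintro x' ⟨x, hxS, rfl⟩ hne
  have hne' : x ≠ p := fun hh => hne (by rw [hh])
  have hlt := h x hxS hne'
  rw [cast_dot c x, cast_dot c p]
  exact_mod_cast hlt

lemma not_extreme_of_mid_int (x y p : Fin d → ℤ) (hx : x ∈ SQ d θ) (hy : y ∈ SQ d θ)
    (hxy : x ≠ y) (hmid : ∀ l, x l + y l = p l + p l) :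
    toR p ∉ (convexHull ℝ (toR '' SQ d θ)).extremePoints ℝ := by
  refine not_extreme_of_mid (toR '' SQ d θ) (toR p) (toR x) (toR y) ⟨x, hx, rfl⟩ ⟨y, hy, rfl⟩
    (fun hc => hxy (toR_inj hc)) ?_
  funext l
  have := hmid l
  simp only [Pi.add_apply, toR]
  exact_mod_cast this

lemma uQ_eq_Upt' (hd : 0 < d) (m : Fin d) : uQ d θ ((m:ℕ)+2) = Upt θ m := by
  rw [uQ_eq_Upt (by omega) (by have := m.isLt; omega) hd]
  congr 1

lemma vQ_eq_Vpt' (hd : 0 < d) (a : Fin d) (m : ℕ) (ham : (a:ℕ) + 2 ≤ m) (hmd : m ≤ d) :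
    vQ d θ ((a:ℕ)+1) (m+1) = Vpt θ a m := by
  rw [vQ_eq_Vpt (by omega) (by omega) (by omega) hd]
  congr 1

end Grevlex

open Grevlex

/-- The vertices of the grevlex polytope `Q` are exactly `0`, the points
`u^k` for `2 ≤ k ≤ d+1`, and the points `v^{j,k}` for `1 ≤ j < k-1 ≤ d`; in particular
`u^2 = θ`, `u^{d+1} = b·e_d`, and `v^{j,d+1} = (b-1)e_j`. -/
theorem grevlexQ_extremePoints (d : ℕ) (hd : 3 ≤ d) (θ : Fin d → ℤ) (hθ : ∀ i, 1 ≤ θ i) :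
    (grevlexQ d θ).extremePoints ℝ =
        {(0 : Fin d → ℝ)} ∪
          {p | ∃ k : ℕ, 2 ≤ k ∧ k ≤ d + 1 ∧ p = toR (uQ d θ k)} ∪
          {p | ∃ j k : ℕ, 1 ≤ j ∧ j < k - 1 ∧ k - 1 ≤ d ∧ p = toR (vQ d θ j k)} ∧
      uQ d θ 2 = θ ∧
      uQ d θ (d + 1) = (fun i : Fin d => if (i : ℕ) = d - 1 then bsum θ else 0) ∧
      (∀ j : ℕ, 1 ≤ j → j ≤ d - 1 →
        vQ d θ j (d + 1) = fun i : Fin d => if (i : ℕ) = j - 1 then bsum θ - 1 else 0) := by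
  have hd0 : 0 < d := by omega
  refine ⟨?_, uQ_two hd0, uQ_top, fun j hj1 hjd => vQ_top j hj1 hjd⟩
  rw [grevlexQ_eq]
  ext p
  simp only [Set.mem_union, Set.mem_singleton_iff, Set.mem_setOf_eq]
  constructor
  · -- extreme point ⇒ listed
    intro hp
    have hpA : p ∈ toR '' SQ d θ := extremePoints_convexHull_subset hp
    obtain ⟨x, hxS, rfl⟩ := hpA
    rcases classify hθ hd hxS with (hx0 | ⟨m, rfl⟩ | ⟨a, m, ham, hmd, rfl⟩) | ⟨y, z, hy, hz, hyz, hmid⟩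
    · left; left
      rw [hx0]
      funext i
      simp [toR]
    · left; right
      refine ⟨(m:ℕ) + 2, by omega, by have := m.isLt; omega, ?_⟩
      rw [uQ_eq_Upt' hd0 m]
    · right
      refine ⟨(a:ℕ) + 1, m + 1, by omega, by omega, by omega, ?_⟩
      rw [vQ_eq_Vpt' hd0 a m ham hmd]
    · exact absurd hp (not_extreme_of_mid_int y z _ hy hz hyz hmid)
  · -- listed ⇒ extreme point
    rintro ((hp0 | ⟨k, h2, hk, rfl⟩) | ⟨j, k, hj, hjk, hkd, rfl⟩)
    · have h0 : p = toR (0 : Fin d → ℤ) := by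
        rw [hp0]
        funext i
        simp [toR]
      rw [h0]
      exact extreme_of_strict_max_int _ _ (zero_mem hθ (by omega)) (strictmax_zero hθ)
    · set m : Fin d := ⟨k - 2, by omega⟩ with hmdef
      have hmv : (m:ℕ) = k - 2 := rfl
      have hk2 : k = (m:ℕ) + 2 := by omega
      rw [hk2, uQ_eq_Upt' hd0 m]
      exact extreme_of_strict_max_int _ _ (Upt_mem hθ _) (strictmax_Upt hθ hd _)
    · set a : Fin d := ⟨j - 1, by omega⟩ with hadef
      have hav : (a:ℕ) = j - 1 := rfl
      set m : ℕ := k - 1 with hm0def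
      have ham : (a:ℕ) + 2 ≤ m := by omega
      have hmd : m ≤ d := by omega
      have hj2 : j = (a:ℕ) + 1 := by omega
      have hk2 : k = m + 1 := by omega
      rw [hj2, hk2, vQ_eq_Vpt' hd0 a m ham hmd]
      by_cases hm : m < d
      · exact extreme_of_strict_max_int _ _ (Vpt_mem hθ hd0 ham (by omega))
          (strictmax_Vpt hθ hd ham hm)
      · have hkd' : m = d := by omega
        rw [hkd']
        exact extreme_of_strict_max_int _ _ (Vpt_mem hθ hd0 (by omega) (le_refl d))
          (strictmax_W hθ hd (by omega))
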